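/- arXiv:1310.1199 — 7 statements merged into one kernel-verified Lean document; each statement's English description precedes it below -/
import Mathlib

section
/- Let X be a non-negative heavy-tailed random variable. Then there exist numbers 0 < a < b < ∞ and a concave function h* : [0,∞) → [0,∞) with h*(0) = 0 such that E[exp(a·h*(X))] < ∞ and E[exp(b·h*(X))] = ∞. -/
open MeasureTheory Filter Set

noncomputable def itail {Ω : Type*} [MeasurableSpace Ω] (μ : Measure Ω) (X : Ω → ℝ) (t : ℝ) :
    ENNReal :=
  ⨆ (B : Set Ω) (_ : MeasurableSet B ∧ B ⊆ {ω | t < X ω}), μ B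

section itail
variable {Ω : Type*} [MeasurableSpace Ω] (μ : Measure Ω) (X : Ω → ℝ)

lemma le_itail {B : Set Ω} {t : ℝ} (hB : MeasurableSet B) (hsub : B ⊆ {ω | t < X ω}) :
    μ B ≤ itail μ X t :=
  le_iSup₂ (f := fun (B : Set Ω) (_ : MeasurableSet B ∧ B ⊆ {ω | t < X ω}) => μ B) B ⟨hB, hsub⟩

lemma itail_le_one [IsProbabilityMeasure μ] (t : ℝ) : itail μ X t ≤ 1 :=
  iSup₂_le fun B _ => prob_le_one

lemma itail_anti {t t' : ℝ} (h : t ≤ t') : itail μ X t' ≤ itail μ X t :=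
  iSup₂_le fun B hB => le_itail μ X hB.1 fun ω hω => lt_of_le_of_lt h (hB.2 hω)

lemma itail_ne_top [IsProbabilityMeasure μ] (t : ℝ) : itail μ X t ≠ ⊤ :=
  fun h => by simpa [h] using itail_le_one μ X t

/-- lower bound on lintegral via inner tail -/
lemma mul_itail_le_lintegral {g : Ω → ENNReal} {c : ENNReal} {t : ℝ}
    (hc : ∀ ω, t < X ω → c ≤ g ω) : c * itail μ X t ≤ ∫⁻ ω, g ω ∂μ := by
  rw [itail, ENNReal.mul_iSup]
  refine iSup_le fun B => ?_
  rw [ENNReal.mul_iSup]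
  refine iSup_le fun hB => ?_
  calc c * μ B = ∫⁻ ω, B.indicator (fun _ => c) ω ∂μ := (lintegral_indicator_const hB.1 c).symm
    _ ≤ ∫⁻ ω, g ω ∂μ := by
        refine lintegral_mono fun ω => ?_
        by_cases hω : ω ∈ B
        · simpa [hω] using hc ω (hB.2 hω)
        · simp [hω]

/-- upper bound on lintegral via inner tails along a level sequence -/
lemma lintegral_le_levels [IsProbabilityMeasure μ] {g : Ω → ENNReal}
    (hg : ∀ ω, g ω ≠ ⊤) (u : ℕ → ℝ) (c : ℕ → ENNReal) (hcmono : Monotone c)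
    (hbound : ∀ ω n, X ω ≤ u n → g ω ≤ c n)
    (hcover : ∀ ω, ∃ n, X ω ≤ u n)
    (hcu : ∀ x : ENNReal, x ≠ ⊤ → ∃ n, x ≤ c n) :
    ∫⁻ ω, g ω ∂μ ≤ c 0 + ∑' n, c (n + 1) * itail μ X (u n) := by
  rw [MeasureTheory.lintegral]
  refine iSup₂_le fun φ hφ => ?_
  classical
  set B : ℕ → Set Ω := fun n => {ω | c n < φ ω} with hBdef
  have hBmeas : ∀ n, MeasurableSet (B n) := fun n =>
    φ.measurable measurableSet_Ioi
  have hBsub : ∀ n, B n ⊆ {ω | u n < X ω} := by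
    intro n ω hω
    by_contra hx
    exact absurd ((hφ ω).trans (hbound ω n (not_lt.1 hx))) (not_le.2 hω)
  set ψ : Ω → ENNReal := fun ω => c 0 + ∑' n, (B n).indicator (fun _ => c (n + 1)) ω with hψdef
  have hφψ : ∀ ω, φ ω ≤ ψ ω := by
    intro ω
    by_cases h0 : φ ω ≤ c 0
    · exact h0.trans le_self_add
    have hφlt : φ ω ≠ ⊤ := fun h => hg ω (top_le_iff.1 (h ▸ hφ ω))
    obtain ⟨n₁, hn₁⟩ := hcu (φ ω) hφlt
    set P : ℕ → Prop := fun n => c n < φ ω with hPdef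
    have hP0 : P 0 := not_le.1 h0
    set N := Nat.findGreatest P n₁ with hNdef
    have hPN : P N := Nat.findGreatest_spec (Nat.zero_le n₁) hP0
    have hNlt : N < n₁ := by
      rcases lt_or_eq_of_le (Nat.findGreatest_le (P := P) n₁) with h | h
      · exact h
      · exact absurd hn₁ (not_le.2 (h ▸ hPN))
    have hnext : ¬ P (N + 1) := Nat.findGreatest_is_greatest (Nat.lt_succ_self N) hNlt
    have hωB : ω ∈ B N := hPN
    calc φ ω ≤ c (N + 1) := not_lt.1 hnext
      _ = (B N).indicator (fun _ => c (N + 1)) ω := by simp [hωB]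
      _ ≤ ∑' n, (B n).indicator (fun _ => c (n + 1)) ω := ENNReal.le_tsum N
      _ ≤ ψ ω := le_add_self
  have hψint : ∫⁻ ω, ψ ω ∂μ = c 0 + ∑' n, c (n + 1) * μ (B n) := by
    rw [hψdef, lintegral_add_left measurable_const, lintegral_const, measure_univ, mul_one,
      lintegral_tsum fun n => (measurable_const.indicator (hBmeas n)).aemeasurable]
    congr 1
    exact tsum_congr fun n => lintegral_indicator_const (hBmeas n) _
  calc φ.lintegral μ = ∫⁻ ω, φ ω ∂μ := (φ.lintegral_eq_lintegral μ).symm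
    _ ≤ ∫⁻ ω, ψ ω ∂μ := lintegral_mono hφψ
    _ = c 0 + ∑' n, c (n + 1) * μ (B n) := hψint
    _ ≤ c 0 + ∑' n, c (n + 1) * itail μ X (u n) := by
        refine add_le_add_right (ENNReal.tsum_le_tsum fun n => ?_) _
        exact mul_le_mul_right (le_itail μ X (hBmeas n) (hBsub n)) _

end itail

section itail2
variable {Ω : Type*} [MeasurableSpace Ω] (μ : Measure Ω) (X : Ω → ℝ)

lemma exists_meas_lt_itail {t : ℝ} {c : ENNReal} (h : c < itail μ X t) :
    ∃ B : Set Ω, MeasurableSet B ∧ B ⊆ {ω | t < X ω} ∧ c < μ B := by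
  rw [itail] at h
  rcases lt_iSup_iff.1 h with ⟨B, hB⟩
  rcases lt_iSup_iff.1 hB with ⟨⟨h1, h2⟩, h3⟩
  exact ⟨B, h1, h2, h3⟩

/-- the inner tail tends to zero -/
lemma itail_to_zero [IsProbabilityMeasure μ] {c : ENNReal} (hc : 0 < c) :
    ∃ T : ℝ, itail μ X T < c := by
  by_contra hcon
  push_neg at hcon
  have hctop : c ≠ ⊤ := by
    intro h
    have h1 := hcon 0
    rw [h, top_le_iff] at h1
    have h2 : itail μ X 0 ≤ 1 := iSup₂_le fun B _ => prob_le_one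
    rw [h1] at h2
    exact absurd h2 (by simp)
  have hc2 : c / 2 < c := ENNReal.half_lt_self hc.ne' hctop
  choose B hBm hBs hBlt using fun n : ℕ => exists_meas_lt_itail μ X (hc2.trans_le (hcon (n : ℝ)))
  set C : ℕ → Set Ω := fun n => ⋃ k, B (n + k) with hC
  have hCm : ∀ n, NullMeasurableSet (C n) μ := fun n =>
    (MeasurableSet.iUnion fun k => hBm _).nullMeasurableSet
  have hCanti : Antitone C := by
    intro m n hmn
    refine iUnion_subset fun k => ?_
    have he : n + k = m + (n + k - m) := by omega
    rw [he]
    exact subset_iUnion (fun j => B (m + j)) _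
  have hIC : ⋂ n, C n = ∅ := by
    ext ω
    simp only [mem_iInter, mem_empty_iff_false, iff_false]
    intro h
    obtain ⟨n, hn⟩ := exists_nat_gt (X ω)
    obtain ⟨k, hk⟩ := mem_iUnion.1 (h n)
    have h2 := hBs (n + k) hk
    simp only [mem_setOf_eq] at h2
    have : (n : ℝ) ≤ ((n + k : ℕ) : ℝ) := by exact_mod_cast Nat.le_add_right n k
    linarith
  have htend : Tendsto (μ ∘ C) atTop (nhds 0) := by
    have := tendsto_measure_iInter_atTop (μ := μ) hCm hCanti ⟨0, measure_ne_top μ _⟩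
    rwa [hIC, measure_empty] at this
  have hev := htend.eventually_lt_const (ENNReal.half_pos hc.ne')
  rcases hev.exists with ⟨n, hn⟩
  have hBC : μ (B n) ≤ μ (C n) := by
    refine measure_mono ?_
    have : B n = B (n + 0) := by norm_num
    rw [this]
    exact subset_iUnion (fun j => B (n + j)) 0
  exact absurd ((hBlt n).trans_le hBC) (not_lt.2 hn.le)

end itail2



lemma itail_heavy {Ω : Type*} [MeasurableSpace Ω] (μ : Measure Ω) (X : Ω → ℝ) [IsProbabilityMeasure μ]
    (hheavy : ∀ s > (0 : ℝ), ∫⁻ ω, ENNReal.ofReal (Real.exp (s * X ω)) ∂μ = ⊤) :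
    ∀ s > (0 : ℝ), ∀ T : ℝ, ∃ t, T ≤ t ∧
      ENNReal.ofReal (Real.exp (-(s * t))) < itail μ X t := by
  intro s hs T
  by_contra hcon
  push_neg at hcon
  set T₀ : ℝ := max T 0 with hT₀
  have hT₀0 : 0 ≤ T₀ := le_max_right _ _
  have hcon' : ∀ t : ℝ, T₀ ≤ t → itail μ X t ≤ ENNReal.ofReal (Real.exp (-(s * t))) := by
    intro t ht
    exact hcon t ((le_max_left T 0).trans ht)
  have hs2 : 0 < s / 2 := by linarith
  have key := lintegral_le_levels μ X (g := fun ω => ENNReal.ofReal (Real.exp (s / 2 * X ω)))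
    (fun ω => ENNReal.ofReal_ne_top)
    (fun n => T₀ + n) (fun n => ENNReal.ofReal (Real.exp (s / 2 * (T₀ + n))))
    (fun n n' hnn => ENNReal.ofReal_le_ofReal (Real.exp_le_exp.2
      (mul_le_mul_of_nonneg_left (by exact_mod_cast add_le_add_right (Nat.cast_le.2 hnn) T₀) hs2.le)))
    (fun ω n hω => ENNReal.ofReal_le_ofReal (Real.exp_le_exp.2 (mul_le_mul_of_nonneg_left hω hs2.le)))
    (fun ω => by
      obtain ⟨n, hn⟩ := exists_nat_ge (X ω - T₀)
      refine ⟨n, ?_⟩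
      show X ω ≤ T₀ + (n:ℝ)
      linarith)
    (by
      intro x hx
      obtain ⟨n, hn⟩ := exists_nat_ge ((2 / s) * x.toReal)
      refine ⟨n, ?_⟩
      have h1 : x.toReal ≤ s / 2 * (T₀ + n) := by
        have : x.toReal = s / 2 * ((2 / s) * x.toReal) := by field_simp
        rw [this]
        have h2 : (2 / s) * x.toReal ≤ T₀ + n := by linarith
        nlinarith
      calc x = ENNReal.ofReal x.toReal := (ENNReal.ofReal_toReal hx).symm
        _ ≤ ENNReal.ofReal (Real.exp (s / 2 * (T₀ + n))) := by
            refine ENNReal.ofReal_le_ofReal (h1.trans ?_)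
            linarith [Real.add_one_le_exp (s / 2 * (T₀ + n))])
  set r : ENNReal := ENNReal.ofReal (Real.exp (-(s / 2))) with hr
  have hterm : ∀ n : ℕ, ENNReal.ofReal (Real.exp (s / 2 * (T₀ + (n + 1)))) *
      itail μ X (T₀ + n) ≤ ENNReal.ofReal (Real.exp s) * r ^ n := by
    intro n
    have h1 : itail μ X (T₀ + n) ≤ ENNReal.ofReal (Real.exp (-(s * (T₀ + n)))) :=
      hcon' _ (by linarith [Nat.cast_nonneg (α := ℝ) n])
    calc ENNReal.ofReal (Real.exp (s / 2 * (T₀ + (n + 1)))) * itail μ X (T₀ + n)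
        ≤ ENNReal.ofReal (Real.exp (s / 2 * (T₀ + (n + 1)))) *
          ENNReal.ofReal (Real.exp (-(s * (T₀ + n)))) := mul_le_mul_right h1 _
      _ = ENNReal.ofReal (Real.exp (s / 2 * (T₀ + (n + 1)) + -(s * (T₀ + n)))) := by
          rw [← ENNReal.ofReal_mul (Real.exp_nonneg _), ← Real.exp_add]
      _ ≤ ENNReal.ofReal (Real.exp (s + (n : ℝ) * (-(s / 2)))) := by
          refine ENNReal.ofReal_le_ofReal (Real.exp_le_exp.2 ?_)
          have : (0:ℝ) ≤ n := Nat.cast_nonneg n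
          nlinarith
      _ = ENNReal.ofReal (Real.exp s) * r ^ n := by
          rw [Real.exp_add, ENNReal.ofReal_mul (Real.exp_nonneg _)]
          congr 1
          rw [hr, ← ENNReal.ofReal_pow (Real.exp_nonneg _), ← Real.exp_nat_mul]
  have hsum : ∑' n : ℕ, ENNReal.ofReal (Real.exp (s / 2 * (T₀ + (n + 1)))) *
      itail μ X (T₀ + n) ≠ ⊤ := by
    refine ne_top_of_le_ne_top ?_ (ENNReal.tsum_le_tsum hterm)
    rw [ENNReal.tsum_mul_left, ENNReal.tsum_geometric]
    refine ENNReal.mul_ne_top ENNReal.ofReal_ne_top (ENNReal.inv_ne_top.2 ?_)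
    rw [ne_eq, tsub_eq_zero_iff_le]
    intro h
    have : r < 1 := by
      rw [hr]
      exact ENNReal.ofReal_lt_one.2 (Real.exp_lt_one_iff.2 (by linarith))
    exact absurd h (not_le.2 this)
  rw [hheavy (s / 2) hs2] at key
  have : (⊤ : ENNReal) ≠ ⊤ := by
    refine ne_top_of_le_ne_top ?_ key
    exact ENNReal.add_ne_top.2 ⟨ENNReal.ofReal_ne_top, by simpa using hsum⟩
  exact this rfl


namespace Stmt4Aux

variable (ℓ : ℝ → ℝ)

noncomputable def qq (v : ℝ) : ℝ := sInf {x | v ≤ ℓ x}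

section qq
variable {ℓ : ℝ → ℝ} (hmono : Monotone ℓ) (hneg : ∀ t < (0:ℝ), ℓ t = 0)
  (htop : ∀ v : ℝ, ∃ T, v ≤ ℓ T)

include hneg in
lemma qq_bddBelow {v : ℝ} (hv : 0 < v) : BddBelow {x | v ≤ ℓ x} := by
  refine ⟨0, fun x hx => ?_⟩
  by_contra h
  push_neg at h
  have h2 := hneg x h
  simp only [mem_setOf_eq] at hx
  linarith

include hneg in
lemma qq_le {v x : ℝ} (hv : 0 < v) (h : v ≤ ℓ x) : qq ℓ v ≤ x :=
  csInf_le (qq_bddBelow hneg hv) h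

include hneg in
lemma lt_qq {v x : ℝ} (hv : 0 < v) (h : x < qq ℓ v) : ℓ x < v := by
  by_contra hc
  exact absurd (qq_le hneg hv (not_lt.1 hc)) (not_le.2 h)

include hmono hneg htop in
lemma qq_lt {v x : ℝ} (hv : 0 < v) (h : qq ℓ v < x) : v ≤ ℓ x := by
  obtain ⟨y, hy, hyx⟩ := (csInf_lt_iff (qq_bddBelow hneg hv) (htop v)).1 h
  exact le_trans hy (hmono hyx.le)

include hmono htop in
lemma le_qq {v t : ℝ} (h : ∀ y ≤ t, ℓ y < v) : t ≤ qq ℓ v := by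
  refine le_csInf (htop v) fun y hy => ?_
  by_contra hc
  exact absurd (h y (not_le.1 hc).le) (not_lt.2 hy)

end qq

noncomputable def knot : ℕ → ℝ × ℝ
  | 0 => (0, 0)
  | m + 1 =>
    (max (qq ℓ (2 ^ (m + 2))) ((knot m).1 + 2 * (knot m).2 + 1),
     max (qq ℓ (2 ^ (m + 2))) ((knot m).1 + 2 * (knot m).2 + 1) - (knot m).1)

noncomputable def kx (m : ℕ) : ℝ := (knot ℓ m).1
noncomputable def kg (m : ℕ) : ℝ := (knot ℓ m).2

lemma kx_zero : kx ℓ 0 = 0 := rfl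
lemma kg_zero : kg ℓ 0 = 0 := rfl

lemma kx_succ (m : ℕ) :
    kx ℓ (m + 1) = max (qq ℓ (2 ^ (m + 2))) (kx ℓ m + 2 * kg ℓ m + 1) := rfl

lemma kg_succ (m : ℕ) : kg ℓ (m + 1) = kx ℓ (m + 1) - kx ℓ m := rfl

lemma kx_succ_ge (m : ℕ) : kx ℓ m + 2 * kg ℓ m + 1 ≤ kx ℓ (m + 1) := by
  rw [kx_succ]; exact le_max_right _ _

lemma qq_le_kx_succ (m : ℕ) : qq ℓ (2 ^ (m + 2)) ≤ kx ℓ (m + 1) := by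
  rw [kx_succ]; exact le_max_left _ _

lemma kg_nonneg : ∀ m, 0 ≤ kg ℓ m := by
  intro m
  induction m with
  | zero => simp [kg_zero]
  | succ n ih =>
    rw [kg_succ]
    have := kx_succ_ge ℓ n
    linarith

lemma kg_succ_ge (m : ℕ) : 2 * kg ℓ m + 1 ≤ kg ℓ (m + 1) := by
  rw [kg_succ]
  have := kx_succ_ge ℓ m
  linarith

lemma kg_succ_pos (m : ℕ) : 1 ≤ kg ℓ (m + 1) := by
  have h1 := kg_succ_ge ℓ m
  have h2 := kg_nonneg ℓ m
  linarith

lemma kx_lt_succ (m : ℕ) : kx ℓ m < kx ℓ (m + 1) := by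
  have h1 := kg_succ ℓ m
  have h2 := kg_succ_pos ℓ m
  linarith

lemma kx_strictMono : StrictMono (kx ℓ) :=
  strictMono_nat_of_lt_succ (kx_lt_succ ℓ)

lemma kx_nonneg (m : ℕ) : 0 ≤ kx ℓ m := by
  induction m with
  | zero => simp [kx_zero]
  | succ n ih => have := kx_lt_succ ℓ n; linarith

lemma kx_ge_nat (m : ℕ) : (m : ℝ) ≤ kx ℓ m := by
  induction m with
  | zero => simp [kx_zero]
  | succ n ih =>
    have h1 := kx_succ_ge ℓ n
    have h2 := kg_nonneg ℓ n
    push_cast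
    linarith

lemma kx_le_kg_succ : ∀ m, kx ℓ m ≤ kg ℓ (m + 1) := by
  intro m
  induction m with
  | zero => rw [kx_zero]; have := kg_succ_pos ℓ 0; linarith
  | succ n ih =>
    have h1 : kx ℓ (n + 1) = kx ℓ n + kg ℓ (n + 1) := by rw [kg_succ]; ring
    have h2 := kg_succ_ge ℓ (n + 1)
    linarith

noncomputable def kV (m : ℕ) : ℝ := 2 ^ m - 1
noncomputable def ks (m : ℕ) : ℝ := 2 ^ m / kg ℓ (m + 1)
noncomputable def kA (m : ℕ) (y : ℝ) : ℝ := kV m + ks ℓ m * (y - kx ℓ m)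

lemma kg_succ_pos' (m : ℕ) : 0 < kg ℓ (m + 1) := lt_of_lt_of_le one_pos (kg_succ_pos ℓ m)

lemma ks_pos (m : ℕ) : 0 < ks ℓ m := div_pos (by positivity) (kg_succ_pos' ℓ m)

lemma ks_succ_le (m : ℕ) : ks ℓ (m + 1) ≤ ks ℓ m := by
  rw [ks, ks, div_le_div_iff₀ (kg_succ_pos' ℓ (m + 1)) (kg_succ_pos' ℓ m)]
  have h1 := kg_succ_ge ℓ (m + 1)
  have h2 := kg_nonneg ℓ (m + 1)
  have h3 : (0:ℝ) < 2 ^ m := by positivity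
  have he : (2:ℝ) ^ (m + 1) = 2 * 2 ^ m := by ring
  nlinarith

lemma ks_anti : Antitone (ks ℓ) := antitone_nat_of_succ_le (ks_succ_le ℓ)

lemma kA_right (m : ℕ) : kA ℓ m (kx ℓ (m + 1)) = kV (m + 1) := by
  rw [kA, ks, ← kg_succ]
  have h := (kg_succ_pos' ℓ m).ne'
  rw [kV, kV]
  field_simp
  ring

lemma kA_diff (k : ℕ) (y : ℝ) :
    kA ℓ k y - kA ℓ (k + 1) y = (ks ℓ k - ks ℓ (k + 1)) * (y - kx ℓ (k + 1)) := by
  have h1 : kA ℓ k y = kA ℓ k (kx ℓ (k+1)) + ks ℓ k * (y - kx ℓ (k+1)) := by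
    rw [kA, kA]; ring
  rw [h1, kA_right, kA]
  ring

lemma kA_lb (m : ℕ) (y : ℝ) : -1 + min 0 (ks ℓ 0 * y) ≤ kA ℓ m y := by
  have h1 : kV m - ks ℓ m * kx ℓ m ≥ -1 := by
    have h2 : ks ℓ m * kx ℓ m ≤ 2 ^ m := by
      rw [ks, div_mul_eq_mul_div, div_le_iff₀ (kg_succ_pos' ℓ m)]
      have := kx_le_kg_succ ℓ m
      have h3 : (0:ℝ) < 2 ^ m := by positivity
      nlinarith
    rw [kV]
    linarith
  have h4 : min 0 (ks ℓ 0 * y) ≤ ks ℓ m * y := by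
    rcases le_or_gt 0 y with hy | hy
    · exact (min_le_left _ _).trans (mul_nonneg (ks_pos ℓ m).le hy)
    · refine (min_le_right _ _).trans ?_
      have := ks_anti ℓ (Nat.zero_le m)
      nlinarith [ks_pos ℓ m]
  rw [kA]
  have : kA ℓ m y = (kV m - ks ℓ m * kx ℓ m) + ks ℓ m * y := by rw [kA]; ring
  nlinarith [h1, h4]

lemma kA_bddBelow (y : ℝ) : BddBelow (range fun m => kA ℓ m y) := by
  refine ⟨-1 + min 0 (ks ℓ 0 * y), ?_⟩
  rintro z ⟨m, rfl⟩
  exact kA_lb ℓ m y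

noncomputable def hfun (y : ℝ) : ℝ := ⨅ m, kA ℓ m y

lemma hfun_le (m : ℕ) (y : ℝ) : hfun ℓ y ≤ kA ℓ m y :=
  ciInf_le (kA_bddBelow ℓ y) m

lemma le_hfun {c y : ℝ} (h : ∀ m, c ≤ kA ℓ m y) : c ≤ hfun ℓ y :=
  le_ciInf h

lemma chainDown {k j : ℕ} (hkj : k ≤ j) {y : ℝ} (hy : kx ℓ j ≤ y) :
    kA ℓ j y ≤ kA ℓ k y := by
  induction j, hkj using Nat.le_induction with
  | base => exact le_rfl
  | succ n hn ih =>
    have h1 : kx ℓ n ≤ y := (kx_lt_succ ℓ n).le.trans hy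
    refine le_trans ?_ (ih h1)
    have h2 := kA_diff ℓ n y
    have h3 := ks_succ_le ℓ n
    have h4 : kx ℓ (n + 1) ≤ y := hy
    nlinarith

lemma chainUp {k j : ℕ} (hkj : k ≤ j) {y : ℝ} (hy : y ≤ kx ℓ (k + 1)) :
    kA ℓ k y ≤ kA ℓ j y := by
  induction j, hkj using Nat.le_induction with
  | base => exact le_rfl
  | succ n hn ih =>
    refine le_trans ih ?_
    have h2 := kA_diff ℓ n y
    have h3 := ks_succ_le ℓ n
    have h4 : y ≤ kx ℓ (n + 1) :=
      hy.trans ((kx_strictMono ℓ).monotone (by omega))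
    nlinarith

lemma hfun_eq {m : ℕ} {y : ℝ} (h1 : kx ℓ m ≤ y) (h2 : y ≤ kx ℓ (m + 1)) :
    hfun ℓ y = kA ℓ m y := by
  refine le_antisymm (hfun_le ℓ m y) (le_hfun ℓ fun k => ?_)
  rcases le_total k m with hkm | hmk
  · exact chainDown ℓ hkm h1
  · exact chainUp ℓ hmk h2

lemma hfun_knot (m : ℕ) : hfun ℓ (kx ℓ m) = kV m := by
  rw [hfun_eq ℓ le_rfl (kx_lt_succ ℓ m).le, kA]
  ring

lemma hfun_zero : hfun ℓ 0 = 0 := by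
  have := hfun_knot ℓ 0
  rw [kx_zero] at this
  rw [this, kV]
  norm_num

lemma hfun_mono : Monotone (hfun ℓ) := by
  intro y y' hyy
  refine le_hfun ℓ fun m => ?_
  refine (hfun_le ℓ m y).trans ?_
  rw [kA, kA]
  have := ks_pos ℓ m
  nlinarith

lemma hfun_concave : ConcaveOn ℝ univ (hfun ℓ) := by
  refine ⟨convex_univ, fun x _ y _ p q hp hq hpq => ?_⟩
  refine le_hfun ℓ fun m => ?_
  have h1 : kA ℓ m (p • x + q • y) = p * kA ℓ m x + q * kA ℓ m y := by
    simp only [kA, smul_eq_mul]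
    linear_combination (ks ℓ m * kx ℓ m - kV m) * hpq
  rw [h1]
  have h2 : p * hfun ℓ x ≤ p * kA ℓ m x :=
    mul_le_mul_of_nonneg_left (hfun_le ℓ m x) hp
  have h3 : q * hfun ℓ y ≤ q * kA ℓ m y :=
    mul_le_mul_of_nonneg_left (hfun_le ℓ m y) hq
  simp only [smul_eq_mul]
  linarith


section main
variable {ℓ : ℝ → ℝ} (hmono : Monotone ℓ) (hneg : ∀ t < (0:ℝ), ℓ t = 0)
  (htop : ∀ v : ℝ, ∃ T, v ≤ ℓ T)
  (hheavy : ∀ ε > (0:ℝ), ∀ T : ℝ, ∃ t, T ≤ t ∧ ℓ t < ε * t)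

include hmono hneg htop in
lemma ell_knot (k : ℕ) : (2:ℝ) ^ (k + 2) ≤ ℓ (kx ℓ (k + 2)) := by
  have h1 : qq ℓ (2 ^ (k + 2)) ≤ kx ℓ (k + 1) := qq_le_kx_succ ℓ k
  have h2 : kx ℓ (k + 1) < kx ℓ (k + 2) := kx_lt_succ ℓ (k + 1)
  exact qq_lt hmono hneg htop (by positivity) (h1.trans_lt h2)

include hmono hneg htop hheavy in
lemma exists_qbranch (M : ℕ) : ∃ m, M ≤ m ∧ kx ℓ (m + 1) = qq ℓ (2 ^ (m + 2)) := by
  by_contra hcon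
  push_neg at hcon
  have hfb : ∀ m, M ≤ m → kx ℓ (m + 1) = kx ℓ m + 2 * kg ℓ m + 1 ∧
      qq ℓ (2 ^ (m + 2)) < kx ℓ m + 2 * kg ℓ m + 1 := by
    intro m hm
    have hne := hcon m hm
    rw [kx_succ] at hne ⊢
    rcases le_or_gt (kx ℓ m + 2 * kg ℓ m + 1) (qq ℓ (2 ^ (m + 2))) with h | h
    · exact absurd (max_eq_left h) hne
    · exact ⟨max_eq_right h.le, h⟩
  set C : ℝ := kg ℓ M + 1 with hC
  have hC1 : 1 ≤ C := by have := kg_nonneg ℓ M; linarith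
  set D : ℝ := kx ℓ M + 2 * C with hD
  have hD2C : 2 * C ≤ D := by have := kx_nonneg ℓ M; linarith
  set E : ℝ := D + 2 * C + 1 with hE
  have hEpos : 0 < E := by linarith
  have claim1 : ∀ k : ℕ, kg ℓ (M + k) + 1 = 2 ^ k * C := by
    intro k
    induction k with
    | zero => simp [hC]
    | succ n ih =>
      have h1 := (hfb (M + n) (by omega)).1
      have h2 : kg ℓ (M + n + 1) = 2 * kg ℓ (M + n) + 1 := by
        rw [kg_succ, h1]; ring
      have : M + (n + 1) = M + n + 1 := by omega
      rw [this, h2]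
      rw [pow_succ]
      linarith [ih]
  have claim2 : ∀ k : ℕ, kx ℓ (M + k) ≤ D * 2 ^ k := by
    intro k
    induction k with
    | zero => simp [hD]; linarith
    | succ n ih =>
      have h1 : kx ℓ (M + n + 1) = kx ℓ (M + n) + kg ℓ (M + n + 1) := by
        rw [kg_succ]; ring
      have h2 : kg ℓ (M + n + 1) + 1 = 2 ^ (n + 1) * C := by
        have := claim1 (n + 1)
        rwa [show M + (n + 1) = M + n + 1 by omega] at this
      have h3 : (0:ℝ) < 2 ^ n := by positivity
      have : M + (n + 1) = M + n + 1 := by omega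
      rw [this, h1]
      have h4 : kg ℓ (M + n + 1) ≤ 2 ^ (n+1) * C := by linarith
      have h5 : (2:ℝ) ^ (n+1) = 2 * 2^n := by ring
      nlinarith [hD2C, kx_nonneg ℓ M]
  have claim3 : ∀ k : ℕ, qq ℓ (2 ^ (M + k + 2)) < E * 2 ^ k := by
    intro k
    have h1 := (hfb (M + k) (by omega)).2
    have h2 := claim2 k
    have h3 := claim1 k
    have h4 : (1:ℝ) ≤ 2 ^ k := one_le_pow₀ (by norm_num)
    nlinarith
  -- heavy tail contradiction
  obtain ⟨T₁, hT₁⟩ := htop (2 ^ (M + 1))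
  have hεpos : (0:ℝ) < 2 ^ M / E := by positivity
  obtain ⟨t, hTt, hlt⟩ := hheavy (2 ^ M / E) hεpos T₁
  have hℓt : (2:ℝ) ^ (M + 1) ≤ ℓ t := hT₁.trans (hmono hTt)
  have htpos : 0 < t := by
    by_contra h
    push_neg at h
    have h1 : 2 ^ M / E * t ≤ 0 := mul_nonpos_of_nonneg_of_nonpos hεpos.le h
    have h2 : (0:ℝ) < 2 ^ (M + 1) := by positivity
    linarith
  obtain ⟨n₀, hn₀⟩ := exists_nat_gt (ℓ t)
  classical
  set P : ℕ → Prop := fun k => (2:ℝ) ^ (M + k + 1) ≤ ℓ t with hP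
  have hP0 : P 0 := by simpa [hP] using hℓt
  have hPn₀ : ¬ P n₀ := by
    simp only [hP, not_le]
    have h1 : (n₀:ℝ) < 2 ^ n₀ := by exact_mod_cast Nat.lt_two_pow_self (n := n₀)
    have h2 : (2:ℝ) ^ n₀ ≤ 2 ^ (M + n₀ + 1) := by
      refine pow_le_pow_right₀ (by norm_num) (by omega)
    linarith
  set K := Nat.findGreatest P n₀ with hK
  have hPK : P K := Nat.findGreatest_spec (Nat.zero_le n₀) hP0
  have hKlt : K < n₀ := by
    rcases lt_or_eq_of_le (Nat.findGreatest_le (P := P) n₀) with h | h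
    · exact h
    · exact absurd (h ▸ hPK) hPn₀
  have hnotP : ¬ P (K + 1) := Nat.findGreatest_is_greatest (Nat.lt_succ_self K) hKlt
  have hub : ℓ t < 2 ^ (M + K + 2) := by
    have := hnotP
    simp only [hP, not_le] at this
    have he : M + (K + 1) + 1 = M + K + 2 := by omega
    rwa [he] at this
  have htq : t ≤ qq ℓ (2 ^ (M + K + 2)) :=
    le_qq hmono htop fun y hy => (hmono hy).trans_lt hub
  have hqE : qq ℓ (2 ^ (M + K + 2)) < E * 2 ^ K := claim3 K
  have f3 : (2:ℝ) ^ M * 2 ^ K * 2 ≤ ℓ t := by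
    have : (2:ℝ) ^ (M + K + 1) = 2 ^ M * 2 ^ K * 2 := by
      rw [pow_add, pow_add]; ring
    rw [← this]
    exact hPK
  have f4 : E * ℓ t < 2 ^ M * t := by
    have h1 : ℓ t < 2 ^ M * t / E := by
      rw [div_mul_eq_mul_div] at hlt
      exact hlt
    calc E * ℓ t < E * (2 ^ M * t / E) := by
          exact mul_lt_mul_of_pos_left h1 hEpos
      _ = 2 ^ M * t := by field_simp
  have h2M : (0:ℝ) < 2 ^ M := by positivity
  have h2K : (0:ℝ) < 2 ^ K := by positivity
  have c1 : E * (2 ^ M * 2 ^ K * 2) ≤ E * ℓ t := mul_le_mul_of_nonneg_left f3 hEpos.le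
  have c3 : 2 ^ M * t ≤ 2 ^ M * (E * 2 ^ K) :=
    mul_le_mul_of_nonneg_left (htq.trans hqE.le) h2M.le
  nlinarith [mul_pos (mul_pos hEpos h2M) h2K]

include hmono hneg htop hheavy in
lemma hdiv_pts (Mr : ℝ) : ∃ spt : ℝ, Mr ≤ 6 * hfun ℓ spt - ℓ spt := by
  obtain ⟨n₀, hn₀⟩ := exists_nat_ge Mr
  obtain ⟨m, hMm, hqb⟩ := exists_qbranch hmono hneg htop hheavy (n₀ + 2)
  set s : ℝ := kx ℓ m + kg ℓ (m + 1) / 2 with hs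
  have hg := kg_succ_pos ℓ m
  have hxs : kx ℓ (m + 1) = kx ℓ m + kg ℓ (m + 1) := by rw [kg_succ]; ring
  have h1 : kx ℓ m ≤ s := by rw [hs]; linarith
  have h2 : s ≤ kx ℓ (m + 1) := by rw [hs, hxs]; linarith
  have hfs : hfun ℓ s = 2 ^ m - 1 + 2 ^ m / 2 := by
    rw [hfun_eq ℓ h1 h2, kA, ks, kV, hs]
    have hgne : kg ℓ (m + 1) ≠ 0 := by linarith
    field_simp
    ring
  have hslt : s < kx ℓ (m + 1) := by rw [hs, hxs]; linarith
  have hℓs : ℓ s < 2 ^ (m + 2) := by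
    refine lt_qq hneg (by positivity) ?_
    rwa [← hqb]
  have hm2 : ((m:ℝ)) ≤ 2 ^ m := by
    exact_mod_cast (Nat.lt_two_pow_self (n := m)).le
  have hmge : ((n₀:ℝ)) + 2 ≤ (m:ℝ) := by exact_mod_cast hMm
  refine ⟨s, ?_⟩
  have hexp : (2:ℝ) ^ (m + 2) = 4 * 2 ^ m := by ring
  rw [hfs]
  nlinarith
end main

end Stmt4Aux


theorem stmt4 {Ω : Type*} [MeasurableSpace Ω] (μ : Measure Ω) [IsProbabilityMeasure μ]
    (X : Ω → ℝ) (hXnn : ∀ ω, 0 ≤ X ω)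
    (hub : ∀ a > (0 : ℝ), 0 < μ {ω | X ω > a})
    (hheavy : ∀ s > (0 : ℝ), ∫⁻ ω, ENNReal.ofReal (Real.exp (s * X ω)) ∂μ = ⊤) :
    ∃ (a b : ℝ) (hstar : ℝ → ℝ), 0 < a ∧ a < b ∧
      ConcaveOn ℝ (Ici 0) hstar ∧ hstar 0 = 0 ∧ (∀ x ≥ (0 : ℝ), 0 ≤ hstar x) ∧
      (∫⁻ ω, ENNReal.ofReal (Real.exp (a * hstar (X ω))) ∂μ < ⊤) ∧
      (∫⁻ ω, ENNReal.ofReal (Real.exp (b * hstar (X ω))) ∂μ = ⊤) := by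
  -- the tail function and its properties
  have hIheavy := itail_heavy μ X hheavy
  have hIone : ∀ t, itail μ X t ≤ 1 := itail_le_one μ X
  have hIntop : ∀ t, itail μ X t ≠ ⊤ := itail_ne_top μ X
  have hIpos : ∀ t : ℝ, 0 < itail μ X t := by
    intro t
    obtain ⟨t', htt', hlt⟩ := hIheavy 1 one_pos t
    exact lt_of_le_of_lt zero_le (hlt.trans_le (itail_anti μ X htt'))
  set J : ℝ → ℝ := fun t => (itail μ X t).toReal with hJ
  have hJpos : ∀ t, 0 < J t := fun t => ENNReal.toReal_pos (hIpos t).ne' (hIntop t)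
  set ℓ : ℝ → ℝ := fun t => -Real.log (J t) with hℓ
  have hIeq : ∀ t, itail μ X t = ENNReal.ofReal (Real.exp (-ℓ t)) := by
    intro t
    rw [hℓ]
    simp only [neg_neg]
    rw [Real.exp_log (hJpos t), hJ, ENNReal.ofReal_toReal (hIntop t)]
  have hmono : Monotone ℓ := by
    intro t t' htt'
    have h1 : itail μ X t' ≤ itail μ X t := itail_anti μ X htt'
    have h2 : J t' ≤ J t := ENNReal.toReal_le_toReal (hIntop t') (hIntop t) |>.2 h1
    have := Real.log_le_log (hJpos t') h2
    simp only [hℓ]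
    linarith
  have hneg : ∀ t < (0:ℝ), ℓ t = 0 := by
    intro t ht
    have h1 : (1:ENNReal) ≤ itail μ X t := by
      have := le_itail μ X (B := univ) MeasurableSet.univ
        (fun ω _ => lt_of_lt_of_le ht (hXnn ω))
      simpa using this
    have h2 : itail μ X t = 1 := le_antisymm (hIone t) h1
    have h3 : J t = 1 := by rw [hJ]; simp [h2]
    simp [hℓ, h3]
  have htop : ∀ v : ℝ, ∃ T, v ≤ ℓ T := by
    intro v
    obtain ⟨T, hT⟩ := itail_to_zero μ X
      (c := ENNReal.ofReal (Real.exp (-v))) (by positivity)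
    refine ⟨T, ?_⟩
    have h1 : J T < Real.exp (-v) := by
      have := ENNReal.toReal_lt_toReal (hIntop T) ENNReal.ofReal_ne_top |>.2 hT
      rwa [ENNReal.toReal_ofReal (Real.exp_nonneg _)] at this
    have h2 : Real.log (J T) < -v := (Real.log_lt_iff_lt_exp (hJpos T)).2 h1
    simp only [hℓ]
    linarith
  have hheavyℓ : ∀ ε > (0:ℝ), ∀ T : ℝ, ∃ t, T ≤ t ∧ ℓ t < ε * t := by
    intro ε hε T
    obtain ⟨t, hTt, hlt⟩ := hIheavy ε hε T
    refine ⟨t, hTt, ?_⟩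
    rw [hIeq t] at hlt
    have h1 : Real.exp (-(ε * t)) < Real.exp (-ℓ t) :=
      (ENNReal.ofReal_lt_ofReal_iff (Real.exp_pos _)).1 hlt
    have := Real.exp_lt_exp.1 h1
    linarith
  -- construct
  refine ⟨1/4, 6, Stmt4Aux.hfun ℓ, by norm_num, by norm_num,
    (Stmt4Aux.hfun_concave ℓ).subset (subset_univ _) (convex_Ici 0),
    Stmt4Aux.hfun_zero ℓ, ?_, ?_, ?_⟩
  · intro x hx
    have := Stmt4Aux.hfun_mono ℓ hx
    rw [Stmt4Aux.hfun_zero ℓ] at this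
    exact this
  -- finiteness
  · set c : ℕ → ENNReal := fun m => ENNReal.ofReal (Real.exp (1/4 * Stmt4Aux.kV m)) with hc
    have key := lintegral_le_levels μ X
      (g := fun ω => ENNReal.ofReal (Real.exp (1/4 * Stmt4Aux.hfun ℓ (X ω))))
      (fun ω => ENNReal.ofReal_ne_top) (Stmt4Aux.kx ℓ) c
      (by
        intro m m' hmm
        refine ENNReal.ofReal_le_ofReal (Real.exp_le_exp.2 ?_)
        rw [Stmt4Aux.kV, Stmt4Aux.kV]
        have h2 : (2:ℝ)^m ≤ 2^m' := pow_le_pow_right₀ (by norm_num) hmm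
        linarith)
      (by
        intro ω n hω
        refine ENNReal.ofReal_le_ofReal (Real.exp_le_exp.2 ?_)
        have h1 : Stmt4Aux.hfun ℓ (X ω) ≤ Stmt4Aux.kV n := by
          rw [← Stmt4Aux.hfun_knot ℓ n]
          exact Stmt4Aux.hfun_mono ℓ hω
        linarith)
      (by
        intro ω
        obtain ⟨n, hn⟩ := exists_nat_ge (X ω)
        exact ⟨n, hn.trans (Stmt4Aux.kx_ge_nat ℓ n)⟩)
      (by
        intro x hx
        obtain ⟨n, hn⟩ := exists_nat_ge (4 * x.toReal + 1)
        refine ⟨n, ?_⟩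
        have h2 : (n:ℝ) ≤ 2 ^ n := by exact_mod_cast (Nat.lt_two_pow_self (n := n)).le
        have h1 : x.toReal ≤ 1/4 * Stmt4Aux.kV n := by
          rw [Stmt4Aux.kV]
          linarith
        calc x = ENNReal.ofReal x.toReal := (ENNReal.ofReal_toReal hx).symm
          _ ≤ c n := ENNReal.ofReal_le_ofReal
              (h1.trans (by linarith [Real.add_one_le_exp (1/4 * Stmt4Aux.kV n)])))
    set r : ENNReal := ENNReal.ofReal (Real.exp (-1)) with hr
    have hterm : ∀ n : ℕ, c (n+1) * itail μ X (Stmt4Aux.kx ℓ n) ≤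
        ENNReal.ofReal (Real.exp 4) * r ^ n := by
      intro n
      have hrn : r ^ n = ENNReal.ofReal (Real.exp (-(n:ℝ))) := by
        rw [hr, ← ENNReal.ofReal_pow (Real.exp_nonneg _), ← Real.exp_nat_mul]
        norm_num
      have hRHS : ENNReal.ofReal (Real.exp 4) * r ^ n
          = ENNReal.ofReal (Real.exp (4 - n)) := by
        rw [hrn, ← ENNReal.ofReal_mul (Real.exp_nonneg _), ← Real.exp_add, sub_eq_add_neg]
      match n, hrn, hRHS with
      | 0, hrn, hRHS =>
        rw [hRHS]
        calc c 1 * itail μ X (Stmt4Aux.kx ℓ 0) ≤ c 1 * 1 := mul_le_mul_right (hIone _) _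
          _ = c 1 := mul_one _
          _ ≤ ENNReal.ofReal (Real.exp (4 - (0:ℕ))) := by
              rw [hc]
              refine ENNReal.ofReal_le_ofReal (Real.exp_le_exp.2 ?_)
              rw [Stmt4Aux.kV]
              norm_num
      | 1, hrn, hRHS =>
        rw [hRHS]
        calc c 2 * itail μ X (Stmt4Aux.kx ℓ 1) ≤ c 2 * 1 := mul_le_mul_right (hIone _) _
          _ = c 2 := mul_one _
          _ ≤ ENNReal.ofReal (Real.exp (4 - (1:ℕ))) := by
              rw [hc]
              refine ENNReal.ofReal_le_ofReal (Real.exp_le_exp.2 ?_)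
              rw [Stmt4Aux.kV]
              norm_num
      | (k+2), hrn, hRHS =>
        rw [hRHS]
        have hell : (2:ℝ) ^ (k+2) ≤ ℓ (Stmt4Aux.kx ℓ (k+2)) :=
          Stmt4Aux.ell_knot hmono hneg htop k
        have hit : itail μ X (Stmt4Aux.kx ℓ (k+2)) ≤
            ENNReal.ofReal (Real.exp (-(2:ℝ) ^ (k+2))) := by
          rw [hIeq]
          exact ENNReal.ofReal_le_ofReal (Real.exp_le_exp.2 (by linarith))
        calc c (k+3) * itail μ X (Stmt4Aux.kx ℓ (k+2))
            ≤ ENNReal.ofReal (Real.exp (1/4 * Stmt4Aux.kV (k+3))) *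
              ENNReal.ofReal (Real.exp (-(2:ℝ) ^ (k+2))) := mul_le_mul' le_rfl hit
          _ = ENNReal.ofReal (Real.exp (1/4 * Stmt4Aux.kV (k+3) + -(2:ℝ) ^ (k+2))) := by
              rw [← ENNReal.ofReal_mul (Real.exp_nonneg _), ← Real.exp_add]
          _ ≤ ENNReal.ofReal (Real.exp (4 - ((k+2:ℕ):ℝ))) := by
              refine ENNReal.ofReal_le_ofReal (Real.exp_le_exp.2 ?_)
              rw [Stmt4Aux.kV]
              have h1 : ((k:ℝ)+1) ≤ 2 ^ (k+1) := by
                exact_mod_cast (Nat.lt_two_pow_self (n := k+1)).le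
              have h2 : (2:ℝ) ^ (k+3) = 4 * 2 ^ (k+1) := by ring
              have h3 : (2:ℝ) ^ (k+2) = 2 * 2 ^ (k+1) := by ring
              push_cast
              nlinarith
    have hsum : ∑' n : ℕ, c (n+1) * itail μ X (Stmt4Aux.kx ℓ n) ≠ ⊤ := by
      refine ne_top_of_le_ne_top ?_ (ENNReal.tsum_le_tsum hterm)
      rw [ENNReal.tsum_mul_left, ENNReal.tsum_geometric]
      refine ENNReal.mul_ne_top ENNReal.ofReal_ne_top (ENNReal.inv_ne_top.2 ?_)
      rw [ne_eq, tsub_eq_zero_iff_le]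
      refine not_le.2 ?_
      rw [hr]
      exact ENNReal.ofReal_lt_one.2 (Real.exp_lt_one_iff.2 (by norm_num))
    refine lt_of_le_of_lt key ?_
    rw [lt_top_iff_ne_top]
    exact ENNReal.add_ne_top.2 ⟨ENNReal.ofReal_ne_top, hsum⟩
  -- divergence
  · by_contra hcon
    have hlow : ∀ M : ℝ, ENNReal.ofReal (Real.exp M) ≤
        ∫⁻ ω, ENNReal.ofReal (Real.exp (6 * Stmt4Aux.hfun ℓ (X ω))) ∂μ := by
      intro M
      obtain ⟨spt, hspt⟩ := Stmt4Aux.hdiv_pts hmono hneg htop hheavyℓ M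
      have h1 := mul_itail_le_lintegral μ X
        (g := fun ω => ENNReal.ofReal (Real.exp (6 * Stmt4Aux.hfun ℓ (X ω))))
        (c := ENNReal.ofReal (Real.exp (6 * Stmt4Aux.hfun ℓ spt))) (t := spt)
        (by
          intro ω hω
          refine ENNReal.ofReal_le_ofReal (Real.exp_le_exp.2 ?_)
          have := Stmt4Aux.hfun_mono ℓ hω.le
          linarith)
      refine le_trans ?_ h1
      rw [hIeq, ← ENNReal.ofReal_mul (Real.exp_nonneg _), ← Real.exp_add]
      exact ENNReal.ofReal_le_ofReal (Real.exp_le_exp.2 (by linarith))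
    set C := ∫⁻ ω, ENNReal.ofReal (Real.exp (6 * Stmt4Aux.hfun ℓ (X ω))) ∂μ with hC
    have hCne : C ≠ ⊤ := hcon
    have h2 := hlow C.toReal
    rw [ENNReal.ofReal_le_iff_le_toReal hCne] at h2
    linarith [Real.add_one_le_exp C.toReal]
end

section
/- Let X and Y be positive, independent random variables, both essentially unbounded, and let h : [0,∞) → [0,∞) be continuous with h(x) → ∞ as x → ∞. If h(a+b) ≤ h(a) + h(b) for all a, b > 0 (subadditivity), then I_h(X+Y) = min(I_h(X), I_h(Y)), where I_h(Z) := liminf_{x→∞} (-log P(Z > x))/h(x). -/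
open MeasureTheory Filter Set

noncomputable def hex (h : ℝ → ℝ) : ℝ → ℝ := fun t => h (max t 0)

lemma hex_cont {h : ℝ → ℝ} (hcont : ContinuousOn h (Ici 0)) : Continuous (hex h) :=
  hcont.comp_continuous (continuous_id.max continuous_const) (fun t => le_max_right t 0)

lemma hex_eq {h : ℝ → ℝ} {t : ℝ} (ht : 0 ≤ t) : hex h t = h t := by
  simp [hex, max_eq_left ht]

lemma hex_nonneg {h : ℝ → ℝ} (hnn : ∀ x ≥ (0 : ℝ), 0 ≤ h x) (t : ℝ) : 0 ≤ hex h t :=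
  hnn _ (le_max_right t 0)

lemma tailv {Ω : Type*} [MeasurableSpace Ω] (μ : Measure Ω) [IsProbabilityMeasure μ]
    {Z : Ω → ℝ} (hZpos : ∀ ω, 0 < Z ω)
    {h : ℝ → ℝ} (hnn : ∀ x ≥ (0 : ℝ), 0 ≤ h x)
    (hcont : ContinuousOn h (Ici 0)) (htop : Tendsto h atTop atTop)
    (hsub : ∀ a > (0 : ℝ), ∀ b > (0 : ℝ), h (a + b) ≤ h a + h b)
    {s₂ M K : ℝ} (hs₂ : 0 < s₂) (hM : 1 ≤ M)
    (hK : ∀ t ∈ Icc (0 : ℝ) (M + 2), hex h t ≤ K)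
    (tail : ∀ t ≥ M, μ {ω | Z ω > t} ≤ ENNReal.ofReal (Real.exp (-(s₂ * h t)))) :
    ∀ v ≥ K, μ {ω | v < hex h (Z ω)} ≤ ENNReal.ofReal (Real.exp (s₂ * (K - v))) := by
  intro v hv
  set S : Set ℝ := {z : ℝ | v < hex h z} with hS
  -- every element of S is > M + 2
  have hSgt : ∀ z ∈ S, M + 2 < z := by
    intro z hz
    by_contra hle
    push_neg at hle
    rcases le_or_gt 0 z with h0 | h0
    · exact absurd (hK z ⟨h0, hle⟩) (not_le.mpr (lt_of_le_of_lt hv hz))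
    · have : hex h z = hex h 0 := by simp [hex, max_eq_right h0.le]
      have hz' : v < hex h 0 := by rw [hS, mem_setOf_eq] at hz; rwa [this] at hz
      exact absurd (hK 0 ⟨le_refl _, by linarith⟩) (not_le.mpr (lt_of_le_of_lt hv hz'))
  have hSne : S.Nonempty := by
    obtain ⟨z, hz1, hz2⟩ := ((htop.eventually_gt_atTop v).and (eventually_ge_atTop (0:ℝ))).exists
    exact ⟨z, by rwa [hS, mem_setOf_eq, hex_eq hz2]⟩
  have hSbdd : BddBelow S := ⟨M + 2, fun z hz => (hSgt z hz).le⟩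
  set z₀ := sInf S with hz₀
  have hz₀ge : M + 2 ≤ z₀ := le_csInf hSne (fun z hz => (hSgt z hz).le)
  have hz₀mem : v ≤ hex h z₀ := by
    by_contra hlt
    push_neg at hlt
    have hopen : IsOpen {z : ℝ | hex h z < v} := isOpen_lt (hex_cont hcont) continuous_const
    obtain ⟨ε, hε, hball⟩ := Metric.isOpen_iff.mp hopen z₀ hlt
    obtain ⟨z, hzS, hzlt⟩ := (csInf_lt_iff hSbdd hSne).mp (by linarith : sInf S < z₀ + ε)
    have hzge : z₀ ≤ z := csInf_le hSbdd hzS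
    have : z ∈ Metric.ball z₀ ε := by
      rw [Metric.mem_ball, Real.dist_eq, abs_of_nonneg (by linarith)]
      linarith
    have : hex h z < v := hball this
    rw [hS, mem_setOf_eq] at hzS
    linarith
  -- subset
  have hsubset : {ω | v < hex h (Z ω)} ⊆ {ω | Z ω > z₀ - 1} := by
    intro ω hω
    have : Z ω ∈ S := hω
    have := csInf_le hSbdd this
    simp only [mem_setOf_eq]
    linarith
  have h1 : h (z₀ - 1) ≥ v - K := by
    have hpos1 : (0:ℝ) < z₀ - 1 := by linarith
    have := hsub (z₀ - 1) hpos1 1 one_pos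
    have heq : z₀ - 1 + 1 = z₀ := by ring
    rw [heq] at this
    have hK1 : h 1 ≤ K := by
      have := hK 1 ⟨by norm_num, by linarith⟩
      rwa [hex_eq (by norm_num : (0:ℝ) ≤ 1)] at this
    have hz0v : v ≤ h z₀ := by rwa [hex_eq (by linarith : (0:ℝ) ≤ z₀)] at hz₀mem
    linarith
  calc μ {ω | v < hex h (Z ω)} ≤ μ {ω | Z ω > z₀ - 1} := measure_mono hsubset
    _ ≤ ENNReal.ofReal (Real.exp (-(s₂ * h (z₀ - 1)))) := tail _ (by linarith)
    _ ≤ ENNReal.ofReal (Real.exp (s₂ * (K - v))) := by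
        apply ENNReal.ofReal_le_ofReal
        apply Real.exp_le_exp.mpr
        nlinarith [hs₂.le]

lemma moment {Ω : Type*} [MeasurableSpace Ω] (μ : Measure Ω) [IsProbabilityMeasure μ]
    {Z : Ω → ℝ} (hZm : Measurable Z) (hZpos : ∀ ω, 0 < Z ω)
    {h : ℝ → ℝ} (hnn : ∀ x ≥ (0 : ℝ), 0 ≤ h x)
    (hcont : ContinuousOn h (Ici 0)) (htop : Tendsto h atTop atTop)
    (hsub : ∀ a > (0 : ℝ), ∀ b > (0 : ℝ), h (a + b) ≤ h a + h b)
    {s₁ s₂ M : ℝ} (hs₁ : 0 < s₁) (h12 : s₁ < s₂) (hM : 1 ≤ M)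
    (tail : ∀ t ≥ M, μ {ω | Z ω > t} ≤ ENNReal.ofReal (Real.exp (-(s₂ * h t)))) :
    ∫⁻ ω, ENNReal.ofReal (Real.exp (s₁ * hex h (Z ω))) ∂μ < ⊤ := by
  have hs₂ : 0 < s₂ := hs₁.trans h12
  obtain ⟨K, hK⟩ : ∃ K, ∀ t ∈ Icc (0 : ℝ) (M + 2), hex h t ≤ K := by
    obtain ⟨K, hK⟩ := (isCompact_Icc (a := (0:ℝ)) (b := M + 2)).bddAbove_image
      ((hex_cont hcont).continuousOn)
    exact ⟨K, fun t ht => hK (mem_image_of_mem _ ht)⟩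
  have hK0 : 0 ≤ K := le_trans (hex_nonneg hnn 0) (hK 0 ⟨le_refl _, by linarith⟩)
  have hvK := tailv μ hZpos hnn hcont htop hsub hs₂ hM hK tail
  have hm : Measurable fun ω => hex h (Z ω) := (hex_cont hcont).measurable.comp hZm
  set r : ℝ := Real.exp (s₁ - s₂) with hr
  have hr0 : 0 < r := Real.exp_pos _
  have hr1 : r < 1 := Real.exp_lt_one_iff.mpr (by linarith)
  set C₂ : ℝ := Real.exp (s₁ * (K + 2) + (s₂ - s₁) * (K + 1)) + Real.exp (s₁ + s₂ * K + s₂)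
    with hC₂
  have hC₂0 : 0 ≤ C₂ := by positivity
  set A : ℕ → Set Ω := fun n => {ω | (n : ℝ) ≤ hex h (Z ω) ∧ hex h (Z ω) < n + 1} with hA
  have hAm : ∀ n, MeasurableSet (A n) := fun n =>
    (measurableSet_le measurable_const hm).inter (measurableSet_lt hm measurable_const)
  have hpt : ∀ ω, ENNReal.ofReal (Real.exp (s₁ * hex h (Z ω)))
      ≤ ∑' n : ℕ, (A n).indicator (fun _ => ENNReal.ofReal (Real.exp (s₁ * ((n : ℝ) + 1)))) ω := by
    intro ω
    have ht0 : 0 ≤ hex h (Z ω) := hex_nonneg hnn _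
    set n := ⌊hex h (Z ω)⌋₊ with hn
    have h1 : (n : ℝ) ≤ hex h (Z ω) := Nat.floor_le ht0
    have h2 : hex h (Z ω) < n + 1 := Nat.lt_floor_add_one _
    have hmem : ω ∈ A n := ⟨h1, h2⟩
    refine le_trans ?_ (ENNReal.le_tsum n)
    rw [Set.indicator_of_mem hmem]
    exact ENNReal.ofReal_le_ofReal (Real.exp_le_exp.mpr (by nlinarith))
  have hterm : ∀ n : ℕ, ENNReal.ofReal (Real.exp (s₁ * ((n : ℝ) + 1))) * μ (A n)
      ≤ ENNReal.ofReal (C₂ * r ^ n) := by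
    intro n
    have hrn : r ^ n = Real.exp ((n : ℝ) * (s₁ - s₂)) := by
      rw [hr, ← Real.exp_nat_mul]
    rcases le_or_gt ((n : ℝ)) (K + 1) with hc | hc
    · calc ENNReal.ofReal (Real.exp (s₁ * ((n : ℝ) + 1))) * μ (A n)
          ≤ ENNReal.ofReal (Real.exp (s₁ * ((n : ℝ) + 1))) * 1 := by
            exact mul_le_mul_right prob_le_one _
        _ = ENNReal.ofReal (Real.exp (s₁ * ((n : ℝ) + 1))) := mul_one _
        _ ≤ ENNReal.ofReal (C₂ * r ^ n) := by
            apply ENNReal.ofReal_le_ofReal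
            rw [hrn]
            calc Real.exp (s₁ * ((n : ℝ) + 1))
                ≤ Real.exp (s₁ * (K + 2) + (s₂ - s₁) * (K + 1)) * Real.exp ((n : ℝ) * (s₁ - s₂)) := by
                  rw [← Real.exp_add]
                  apply Real.exp_le_exp.mpr
                  nlinarith
              _ ≤ C₂ * Real.exp ((n : ℝ) * (s₁ - s₂)) := by
                  apply mul_le_mul_of_nonneg_right _ (Real.exp_pos _).le
                  rw [hC₂]
                  nlinarith [Real.exp_pos (s₁ + s₂ * K + s₂)]
    · have hsubset : A n ⊆ {ω | (n : ℝ) - 1 < hex h (Z ω)} := by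
        intro ω hω
        have := hω.1
        simp only [mem_setOf_eq]
        linarith
      calc ENNReal.ofReal (Real.exp (s₁ * ((n : ℝ) + 1))) * μ (A n)
          ≤ ENNReal.ofReal (Real.exp (s₁ * ((n : ℝ) + 1)))
              * ENNReal.ofReal (Real.exp (s₂ * (K - ((n : ℝ) - 1)))) := by
            exact mul_le_mul_right ((measure_mono hsubset).trans
              (hvK ((n : ℝ) - 1) (by linarith))) _
        _ = ENNReal.ofReal (Real.exp (s₁ * ((n : ℝ) + 1)) * Real.exp (s₂ * (K - ((n : ℝ) - 1)))) := by
            rw [ENNReal.ofReal_mul (Real.exp_pos _).le]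
        _ ≤ ENNReal.ofReal (C₂ * r ^ n) := by
            apply ENNReal.ofReal_le_ofReal
            rw [hrn, ← Real.exp_add]
            calc Real.exp (s₁ * ((n : ℝ) + 1) + s₂ * (K - ((n : ℝ) - 1)))
                ≤ Real.exp (s₁ + s₂ * K + s₂) * Real.exp ((n : ℝ) * (s₁ - s₂)) := by
                  rw [← Real.exp_add]
                  apply Real.exp_le_exp.mpr
                  ring_nf
                  nlinarith [le_refl (0:ℝ)]
              _ ≤ C₂ * Real.exp ((n : ℝ) * (s₁ - s₂)) := by
                  apply mul_le_mul_of_nonneg_right _ (Real.exp_pos _).le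
                  rw [hC₂]
                  nlinarith [Real.exp_pos (s₁ * (K + 2) + (s₂ - s₁) * (K + 1))]
  calc ∫⁻ ω, ENNReal.ofReal (Real.exp (s₁ * hex h (Z ω))) ∂μ
      ≤ ∫⁻ ω, ∑' n : ℕ,
          (A n).indicator (fun _ => ENNReal.ofReal (Real.exp (s₁ * ((n : ℝ) + 1)))) ω ∂μ :=
        lintegral_mono hpt
    _ = ∑' n : ℕ, ∫⁻ ω,
          (A n).indicator (fun _ => ENNReal.ofReal (Real.exp (s₁ * ((n : ℝ) + 1)))) ω ∂μ :=
        lintegral_tsum (fun n => (measurable_const.indicator (hAm n)).aemeasurable)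
    _ = ∑' n : ℕ, ENNReal.ofReal (Real.exp (s₁ * ((n : ℝ) + 1))) * μ (A n) := by
        apply tsum_congr
        intro n
        exact lintegral_indicator_const (hAm n) _
    _ ≤ ∑' n : ℕ, ENNReal.ofReal (C₂ * r ^ n) := ENNReal.tsum_le_tsum hterm
    _ = ENNReal.ofReal C₂ * ∑' n : ℕ, (ENNReal.ofReal r) ^ n := by
        rw [← ENNReal.tsum_mul_left]
        apply tsum_congr
        intro n
        rw [ENNReal.ofReal_mul hC₂0, ENNReal.ofReal_pow hr0.le]
    _ = ENNReal.ofReal C₂ * (1 - ENNReal.ofReal r)⁻¹ := by rw [ENNReal.tsum_geometric]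
    _ < ⊤ := by
        apply ENNReal.mul_lt_top ENNReal.ofReal_lt_top
        rw [ENNReal.inv_lt_top]
        exact tsub_pos_of_lt (ENNReal.ofReal_lt_one.mpr hr1)

lemma conv_bound {Ω : Type*} [MeasurableSpace Ω] (μ : Measure Ω) [IsProbabilityMeasure μ]
    {X Y : Ω → ℝ} (hXpos : ∀ ω, 0 < X ω) (hYpos : ∀ ω, 0 < Y ω)
    (hXm : Measurable X) (hYm : Measurable Y)
    (hind : ProbabilityTheory.IndepFun X Y μ)
    {h : ℝ → ℝ} (hnn : ∀ x ≥ (0 : ℝ), 0 ≤ h x)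
    (hcont : ContinuousOn h (Ici 0)) (htop : Tendsto h atTop atTop)
    (hsub : ∀ a > (0 : ℝ), ∀ b > (0 : ℝ), h (a + b) ≤ h a + h b)
    {s₁ s₂ M : ℝ} (hs₁ : 0 < s₁) (h12 : s₁ < s₂) (hM : 1 ≤ M)
    (tailX : ∀ t ≥ M, μ {ω | X ω > t} ≤ ENNReal.ofReal (Real.exp (-(s₂ * h t))))
    (tailY : ∀ t ≥ M, μ {ω | Y ω > t} ≤ ENNReal.ofReal (Real.exp (-(s₂ * h t)))) :
    ∃ C > (0 : ℝ), ∀ x ≥ 2 * M,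
      μ {ω | X ω + Y ω > x} ≤ ENNReal.ofReal (C * Real.exp (-(s₁ * h x))) := by
  set ρ := μ.map X with hρ
  set ν := μ.map Y with hν
  haveI : IsProbabilityMeasure ρ := Measure.isProbabilityMeasure_map hXm.aemeasurable
  haveI : IsProbabilityMeasure ν := Measure.isProbabilityMeasure_map hYm.aemeasurable
  have hm : Measurable (hex h) := (hex_cont hcont).measurable
  -- the moment of X
  have hmom : ∫⁻ a, ENNReal.ofReal (Real.exp (s₁ * hex h a)) ∂ρ < ⊤ := by
    rw [hρ, lintegral_map (by fun_prop) hXm]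
    exact moment μ hXm hXpos hnn hcont htop hsub hs₁ h12 hM tailX
  set C₁ : ℝ := (∫⁻ a, ENNReal.ofReal (Real.exp (s₁ * hex h a)) ∂ρ).toReal with hC₁
  have hC₁0 : 0 ≤ C₁ := ENNReal.toReal_nonneg
  have hAle : ∫⁻ a, ENNReal.ofReal (Real.exp (s₁ * hex h a)) ∂ρ ≤ ENNReal.ofReal C₁ := by
    rw [hC₁, ENNReal.ofReal_toReal hmom.ne]
  refine ⟨C₁ + Real.exp (s₁ * h M) + 1, by positivity, ?_⟩
  intro x hx
  have hxM : M ≤ x - M := by linarith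
  have hxM0 : (0:ℝ) < x - M := by linarith
  -- product measure identity
  have hmap : μ.map (fun ω => (X ω, Y ω)) = ρ.prod ν :=
    (ProbabilityTheory.indepFun_iff_map_prod_eq_prod_map_map hXm.aemeasurable
      hYm.aemeasurable).mp hind
  have hSmeas : MeasurableSet {p : ℝ × ℝ | x < p.1 + p.2} :=
    measurableSet_lt measurable_const (measurable_fst.add measurable_snd)
  have key : μ {ω | X ω + Y ω > x} = ∫⁻ a, ν (Ioi (x - a)) ∂ρ := by
    have h1 : μ {ω | X ω + Y ω > x}
        = μ.map (fun ω => (X ω, Y ω)) {p : ℝ × ℝ | x < p.1 + p.2} := by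
      rw [Measure.map_apply (hXm.prodMk hYm) hSmeas]
      rfl
    rw [h1, hmap, Measure.prod_apply hSmeas]
    apply lintegral_congr
    intro a
    congr 1
    ext b
    simp only [mem_preimage, mem_setOf_eq, mem_Ioi]
    exact (sub_lt_iff_lt_add').symm
  rw [key]
  have hg : Measurable fun a => ν (Ioi (x - a)) := by
    have hmono : Monotone fun a => ν (Ioi (x - a)) := by
      intro a b hab
      exact measure_mono (fun t ht => lt_of_le_of_lt (by linarith : x - b ≤ x - a) ht)
    exact hmono.measurable
  have hsplit : ∫⁻ a, ν (Ioi (x - a)) ∂ρ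
      = (∫⁻ a in Iic (x - M), ν (Ioi (x - a)) ∂ρ)
        + ∫⁻ a in (Iic (x - M))ᶜ, ν (Ioi (x - a)) ∂ρ :=
    (lintegral_add_compl _ measurableSet_Iic).symm
  rw [hsplit]
  have hνapp : ∀ a : ℝ, ν (Ioi (x - a)) = μ {ω | Y ω > x - a} := by
    intro a
    rw [hν, Measure.map_apply hYm measurableSet_Ioi]
    rfl
  -- second piece
  have piece2 : ∫⁻ a in (Iic (x - M))ᶜ, ν (Ioi (x - a)) ∂ρ
      ≤ ENNReal.ofReal (Real.exp (s₁ * h M) * Real.exp (-(s₁ * h x))) := by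
    calc ∫⁻ a in (Iic (x - M))ᶜ, ν (Ioi (x - a)) ∂ρ
        ≤ ∫⁻ _ in (Iic (x - M))ᶜ, 1 ∂ρ := by
          apply setLIntegral_mono measurable_const
          intro a _
          exact prob_le_one
      _ = ρ (Iic (x - M))ᶜ := setLIntegral_one _
      _ = μ {ω | X ω > x - M} := by
          rw [compl_Iic, hρ, Measure.map_apply hXm measurableSet_Ioi]
          rfl
      _ ≤ ENNReal.ofReal (Real.exp (-(s₂ * h (x - M)))) := tailX _ hxM
      _ ≤ ENNReal.ofReal (Real.exp (s₁ * h M) * Real.exp (-(s₁ * h x))) := by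
          apply ENNReal.ofReal_le_ofReal
          rw [← Real.exp_add]
          apply Real.exp_le_exp.mpr
          have hhx : h x ≤ h (x - M) + h M := by
            have := hsub (x - M) hxM0 M (by linarith)
            have heq : x - M + M = x := by ring
            rwa [heq] at this
          have hnn1 : 0 ≤ h (x - M) := hnn _ hxM0.le
          nlinarith
  -- first piece
  have piece1 : ∫⁻ a in Iic (x - M), ν (Ioi (x - a)) ∂ρ
      ≤ ENNReal.ofReal (Real.exp (-(s₁ * h x))) * ENNReal.ofReal C₁ := by
    have hunion : Iic (x - M) = Iic 0 ∪ Ioc 0 (x - M) :=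
      (Iic_union_Ioc_eq_Iic hxM0.le).symm
    have hzero : ∫⁻ a in Iic (0:ℝ), ν (Ioi (x - a)) ∂ρ = 0 := by
      apply setLIntegral_measure_zero
      rw [hρ, Measure.map_apply hXm measurableSet_Iic]
      have : X ⁻¹' (Iic 0) = ∅ := by
        ext ω
        simp only [mem_preimage, mem_Iic, mem_empty_iff_false, iff_false, not_le]
        exact hXpos ω
      rw [this, measure_empty]
    calc ∫⁻ a in Iic (x - M), ν (Ioi (x - a)) ∂ρ
        ≤ (∫⁻ a in Iic (0:ℝ), ν (Ioi (x - a)) ∂ρ)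
            + ∫⁻ a in Ioc 0 (x - M), ν (Ioi (x - a)) ∂ρ := by
          rw [hunion]
          exact lintegral_union_le _ _ _
      _ = ∫⁻ a in Ioc 0 (x - M), ν (Ioi (x - a)) ∂ρ := by rw [hzero, zero_add]
      _ ≤ ∫⁻ a in Ioc 0 (x - M),
            ENNReal.ofReal (Real.exp (-(s₁ * h x))) * ENNReal.ofReal (Real.exp (s₁ * hex h a)) ∂ρ := by
          apply setLIntegral_mono (by fun_prop)
          intro a ha
          obtain ⟨ha0, haM⟩ := ha
          have hxa : M ≤ x - a := by linarith
          have hxa0 : (0:ℝ) < x - a := by linarith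
          calc ν (Ioi (x - a)) = μ {ω | Y ω > x - a} := hνapp a
            _ ≤ ENNReal.ofReal (Real.exp (-(s₂ * h (x - a)))) := tailY _ hxa
            _ ≤ ENNReal.ofReal (Real.exp (-(s₁ * h x)) * Real.exp (s₁ * hex h a)) := by
                apply ENNReal.ofReal_le_ofReal
                rw [← Real.exp_add]
                apply Real.exp_le_exp.mpr
                rw [hex_eq ha0.le]
                have hhx : h x ≤ h (x - a) + h a := by
                  have := hsub (x - a) hxa0 a ha0
                  have heq : x - a + a = x := by ring
                  rwa [heq] at this
                have hnn1 : 0 ≤ h (x - a) := hnn _ hxa0.le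
                nlinarith
            _ = ENNReal.ofReal (Real.exp (-(s₁ * h x))) * ENNReal.ofReal (Real.exp (s₁ * hex h a)) := by
                rw [ENNReal.ofReal_mul (Real.exp_pos _).le]
      _ = ENNReal.ofReal (Real.exp (-(s₁ * h x)))
            * ∫⁻ a in Ioc 0 (x - M), ENNReal.ofReal (Real.exp (s₁ * hex h a)) ∂ρ := by
          rw [lintegral_const_mul _ (by fun_prop)]
      _ ≤ ENNReal.ofReal (Real.exp (-(s₁ * h x))) * ENNReal.ofReal C₁ := by
          apply mul_le_mul_right
          exact le_trans (setLIntegral_le_lintegral _ _) hAle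
  calc (∫⁻ a in Iic (x - M), ν (Ioi (x - a)) ∂ρ)
        + ∫⁻ a in (Iic (x - M))ᶜ, ν (Ioi (x - a)) ∂ρ
      ≤ ENNReal.ofReal (Real.exp (-(s₁ * h x))) * ENNReal.ofReal C₁
        + ENNReal.ofReal (Real.exp (s₁ * h M) * Real.exp (-(s₁ * h x))) :=
        add_le_add piece1 piece2
    _ ≤ ENNReal.ofReal ((C₁ + Real.exp (s₁ * h M) + 1) * Real.exp (-(s₁ * h x))) := by
        rw [← ENNReal.ofReal_mul (Real.exp_pos _).le, ← ENNReal.ofReal_add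
          (by positivity) (by positivity)]
        apply ENNReal.ofReal_le_ofReal
        have := (Real.exp_pos (-(s₁ * h x))).le
        nlinarith

theorem stmt6 {Ω : Type*} [MeasurableSpace Ω] (μ : Measure Ω) [IsProbabilityMeasure μ]
    (X Y : Ω → ℝ) (hXpos : ∀ ω, 0 < X ω) (hYpos : ∀ ω, 0 < Y ω)
    (hXub : ∀ a > (0 : ℝ), 0 < μ {ω | X ω > a})
    (hYub : ∀ a > (0 : ℝ), 0 < μ {ω | Y ω > a})
    (hXm : Measurable X) (hYm : Measurable Y)
    (hind : ProbabilityTheory.IndepFun X Y μ)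
    (h : ℝ → ℝ) (hnn : ∀ x ≥ (0 : ℝ), 0 ≤ h x)
    (hcont : ContinuousOn h (Ici 0))
    (htop : Tendsto h atTop atTop)
    (hsub : ∀ a > (0 : ℝ), ∀ b > (0 : ℝ), h (a + b) ≤ h a + h b) :
    Filter.liminf
        (fun x : ℝ => ((-Real.log (μ {ω | X ω + Y ω > x}).toReal / h x : ℝ) : EReal)) atTop
      = min
        (Filter.liminf
          (fun x : ℝ => ((-Real.log (μ {ω | X ω > x}).toReal / h x : ℝ) : EReal)) atTop)
        (Filter.liminf
          (fun x : ℝ => ((-Real.log (μ {ω | Y ω > x}).toReal / h x : ℝ) : EReal)) atTop) := by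
  have hhx : ∀ᶠ x : ℝ in atTop, 0 < h x := htop.eventually_gt_atTop 0
  have hx0 : ∀ᶠ x : ℝ in atTop, 0 < x := eventually_gt_atTop 0
  -- the easy direction, generic in the second variable
  have easy : ∀ Z : Ω → ℝ, (∀ ω, 0 < Z ω) → (∀ a > (0:ℝ), 0 < μ {ω | Z ω > a}) →
      (∀ x : ℝ, {ω | Z ω > x} ⊆ {ω | X ω + Y ω > x}) →
      Filter.liminf
        (fun x : ℝ => ((-Real.log (μ {ω | X ω + Y ω > x}).toReal / h x : ℝ) : EReal)) atTop
      ≤ Filter.liminf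
        (fun x : ℝ => ((-Real.log (μ {ω | Z ω > x}).toReal / h x : ℝ) : EReal)) atTop := by
    intro Z hZpos hZub hZsub
    refine liminf_le_liminf ?_ (by isBoundedDefault) (by isBoundedDefault)
    filter_upwards [hhx, hx0] with x hh hx
    rw [EReal.coe_le_coe_iff]
    have hPle : μ {ω | Z ω > x} ≤ μ {ω | X ω + Y ω > x} := measure_mono (hZsub x)
    have hPXpos : 0 < (μ {ω | Z ω > x}).toReal :=
      ENNReal.toReal_pos (hZub x hx).ne' (measure_ne_top _ _)
    have hPle' : (μ {ω | Z ω > x}).toReal ≤ (μ {ω | X ω + Y ω > x}).toReal :=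
      ENNReal.toReal_mono (measure_ne_top _ _) hPle
    have hlog := Real.log_le_log hPXpos hPle'
    exact div_le_div_of_nonneg_right (neg_le_neg hlog) hh.le
  apply le_antisymm
  · apply le_min
    · exact easy X hXpos hXub (fun x ω hω => lt_of_lt_of_le hω (le_add_of_nonneg_right (hYpos ω).le))
    · exact easy Y hYpos hYub (fun x ω hω => lt_of_lt_of_le hω (le_add_of_nonneg_left (hXpos ω).le))
  · by_contra hlt
    push_neg at hlt
    obtain ⟨c, hLc, hcmin⟩ := EReal.exists_between_coe_real hlt
    have hcle : (c : EReal) ≤ Filter.liminf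
        (fun x : ℝ => ((-Real.log (μ {ω | X ω + Y ω > x}).toReal / h x : ℝ) : EReal)) atTop := by
      rcases le_or_gt c 0 with hc0 | hc0
      · refine Filter.le_liminf_of_le (by isBoundedDefault) ?_
        filter_upwards [hhx] with x hh
        have h1 : (μ {ω | X ω + Y ω > x}).toReal ≤ 1 := by
          have := ENNReal.toReal_mono ENNReal.one_ne_top (prob_le_one (μ := μ) (s := {ω | X ω + Y ω > x}))
          simpa using this
        have h2 : Real.log (μ {ω | X ω + Y ω > x}).toReal ≤ 0 :=
          Real.log_nonpos ENNReal.toReal_nonneg h1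
        have h3 : (0:ℝ) ≤ -Real.log (μ {ω | X ω + Y ω > x}).toReal / h x :=
          div_nonneg (neg_nonneg.mpr h2) hh.le
        exact EReal.coe_le_coe_iff.mpr (le_trans hc0 h3)
      · obtain ⟨s₁, hcs₁, hs₁min⟩ := EReal.exists_between_coe_real hcmin
        obtain ⟨s₂, hs₁s₂, hs₂min⟩ := EReal.exists_between_coe_real hs₁min
        have hcs₁' : c < s₁ := by exact_mod_cast hcs₁
        have hs₁s₂' : s₁ < s₂ := by exact_mod_cast hs₁s₂
        have hs₁0 : 0 < s₁ := hc0.trans hcs₁'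
        have hs₂A : (s₂ : EReal) < Filter.liminf
            (fun x : ℝ => ((-Real.log (μ {ω | X ω > x}).toReal / h x : ℝ) : EReal)) atTop :=
          hs₂min.trans_le (min_le_left _ _)
        have hs₂B : (s₂ : EReal) < Filter.liminf
            (fun x : ℝ => ((-Real.log (μ {ω | Y ω > x}).toReal / h x : ℝ) : EReal)) atTop :=
          hs₂min.trans_le (min_le_right _ _)
        have evX := eventually_lt_of_lt_liminf hs₂A
        have evY := eventually_lt_of_lt_liminf hs₂B
        obtain ⟨M₀, hM₀⟩ := eventually_atTop.mp (((evX.and evY).and (hhx.and hx0)))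
        set M := max M₀ 1 with hMdef
        have hM1 : (1:ℝ) ≤ M := le_max_right _ _
        have tailX : ∀ t ≥ M, μ {ω | X ω > t} ≤ ENNReal.ofReal (Real.exp (-(s₂ * h t))) := by
          intro t ht
          obtain ⟨⟨h1, _⟩, h3, h4⟩ := hM₀ t (le_trans (le_max_left _ _) ht)
          have h1' : s₂ < -Real.log (μ {ω | X ω > t}).toReal / h t := by exact_mod_cast h1
          have hPpos : 0 < (μ {ω | X ω > t}).toReal :=
            ENNReal.toReal_pos (hXub t h4).ne' (measure_ne_top _ _)
          have h5 : s₂ * h t < -Real.log (μ {ω | X ω > t}).toReal := (lt_div_iff₀ h3).mp h1'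
          have h6 : Real.log (μ {ω | X ω > t}).toReal < -(s₂ * h t) := by linarith
          have h7 : (μ {ω | X ω > t}).toReal < Real.exp (-(s₂ * h t)) :=
            (Real.log_lt_iff_lt_exp hPpos).mp h6
          calc μ {ω | X ω > t} = ENNReal.ofReal (μ {ω | X ω > t}).toReal :=
                (ENNReal.ofReal_toReal (measure_ne_top _ _)).symm
            _ ≤ ENNReal.ofReal (Real.exp (-(s₂ * h t))) := ENNReal.ofReal_le_ofReal h7.le
        have tailY : ∀ t ≥ M, μ {ω | Y ω > t} ≤ ENNReal.ofReal (Real.exp (-(s₂ * h t))) := by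
          intro t ht
          obtain ⟨⟨_, h1⟩, h3, h4⟩ := hM₀ t (le_trans (le_max_left _ _) ht)
          have h1' : s₂ < -Real.log (μ {ω | Y ω > t}).toReal / h t := by exact_mod_cast h1
          have hPpos : 0 < (μ {ω | Y ω > t}).toReal :=
            ENNReal.toReal_pos (hYub t h4).ne' (measure_ne_top _ _)
          have h5 : s₂ * h t < -Real.log (μ {ω | Y ω > t}).toReal := (lt_div_iff₀ h3).mp h1'
          have h6 : Real.log (μ {ω | Y ω > t}).toReal < -(s₂ * h t) := by linarith
          have h7 : (μ {ω | Y ω > t}).toReal < Real.exp (-(s₂ * h t)) :=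
            (Real.log_lt_iff_lt_exp hPpos).mp h6
          calc μ {ω | Y ω > t} = ENNReal.ofReal (μ {ω | Y ω > t}).toReal :=
                (ENNReal.ofReal_toReal (measure_ne_top _ _)).symm
            _ ≤ ENNReal.ofReal (Real.exp (-(s₂ * h t))) := ENNReal.ofReal_le_ofReal h7.le
        obtain ⟨C, hCpos, hbound⟩ := conv_bound μ hXpos hYpos hXm hYm hind hnn hcont htop hsub
          hs₁0 hs₁s₂' hM1 tailX tailY
        have hs₁c : 0 < s₁ - c := by linarith
        refine Filter.le_liminf_of_le (by isBoundedDefault) ?_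
        filter_upwards [eventually_ge_atTop (2 * M), hhx, hx0,
          htop.eventually_ge_atTop (max 1 (Real.log C / (s₁ - c)))] with x hx2M hh hxp hhbig
        have hPb := hbound x hx2M
        have hPpos : 0 < (μ {ω | X ω + Y ω > x}).toReal := by
          apply ENNReal.toReal_pos _ (measure_ne_top _ _)
          have : 0 < μ {ω | X ω + Y ω > x} :=
            lt_of_lt_of_le (hXub x hxp) (measure_mono
              (fun ω hω => lt_of_lt_of_le hω (le_add_of_nonneg_right (hYpos ω).le)))
          exact this.ne'
        have hPle : (μ {ω | X ω + Y ω > x}).toReal ≤ C * Real.exp (-(s₁ * h x)) :=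
          ENNReal.toReal_le_of_le_ofReal (by positivity) hPb
        have hlog : Real.log (μ {ω | X ω + Y ω > x}).toReal ≤ Real.log C + -(s₁ * h x) := by
          have := Real.log_le_log hPpos hPle
          rwa [Real.log_mul (ne_of_gt hCpos) (Real.exp_ne_zero _), Real.log_exp] at this
        have hlogC : Real.log C ≤ (s₁ - c) * h x := by
          have h1 : Real.log C / (s₁ - c) ≤ h x := le_trans (le_max_right _ _) hhbig
          calc Real.log C = Real.log C / (s₁ - c) * (s₁ - c) := by field_simp
            _ ≤ h x * (s₁ - c) := mul_le_mul_of_nonneg_right h1 hs₁c.le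
            _ = (s₁ - c) * h x := mul_comm _ _
        have hfinal : c ≤ -Real.log (μ {ω | X ω + Y ω > x}).toReal / h x := by
          rw [le_div_iff₀ hh]
          nlinarith
        exact_mod_cast hfinal
    exact absurd (hcle.trans_lt hLc) (lt_irrefl _)
end

section
/- Let X and Y be positive, independent random variables, both essentially unbounded, and let h : [0,∞) → [0,∞) be continuous with h(x) → ∞ as x → ∞. If h(ab) ≤ h(a) + h(b) for all a, b > 0, then I_h(XY) = min(I_h(X), I_h(Y)), where I_h(Z) := liminf_{x→∞} (-log P(Z > x))/h(x). -/
open MeasureTheory Filter Set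

lemma tail_conv {Ω : Type*} [MeasurableSpace Ω] (μ : Measure Ω) [IsProbabilityMeasure μ]
    {Z : Ω → ℝ} {g : ℝ → ℝ} (hgc : Continuous g)
    (hgtop : Tendsto g atTop atTop) {s T v₀ : ℝ} (hs : 0 < s) (hv0nn : 0 ≤ v₀)
    (hv₀ : ∀ t ≤ T, g t ≤ v₀)
    (htail : ∀ t ≥ T, μ {ω | Z ω > t} ≤ ENNReal.ofReal (Real.exp (-s * g t))) :
    ∀ u : ℝ, μ {ω | u ≤ g (Z ω)} ≤ ENNReal.ofReal (Real.exp (s * v₀) * Real.exp (-s * u)) := by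
  intro u
  rcases le_or_gt u v₀ with hu | hu
  · calc μ {ω | u ≤ g (Z ω)} ≤ 1 := prob_le_one
    _ = ENNReal.ofReal 1 := by simp
    _ ≤ _ := by
        apply ENNReal.ofReal_le_ofReal
        rw [← Real.exp_add]
        exact Real.one_le_exp (by nlinarith)
  · set S := g ⁻¹' Ici u with hSdef
    have hSne : S.Nonempty := (hgtop.eventually_ge_atTop u).exists
    have hSbdd : BddBelow S := by
      refine ⟨T, fun t ht => ?_⟩
      by_contra hc
      push_neg at hc
      have h1 : g t ≤ v₀ := hv₀ t hc.le
      have h2 : u ≤ g t := ht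
      linarith
    have hScl : IsClosed S := isClosed_Ici.preimage hgc
    set a := sInf S with ha
    have haS : a ∈ S := hScl.csInf_mem hSne hSbdd
    have hau : u ≤ g a := haS
    have haT : T < a := by
      by_contra hc
      push_neg at hc
      have := hv₀ a hc
      linarith
    have hsub : {ω | u ≤ g (Z ω)} ⊆ {ω | a ≤ Z ω} := fun ω hω => csInf_le hSbdd hω
    have key : ∀ t ∈ Ico T a, μ {ω | a ≤ Z ω} ≤ ENNReal.ofReal (Real.exp (-s * g t)) := by
      intro t ht
      refine le_trans (measure_mono fun ω hω => ?_) (htail t ht.1)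
      exact lt_of_lt_of_le ht.2 hω
    have hne : (nhdsWithin a (Ico T a)).NeBot := by
      rw [← mem_closure_iff_nhdsWithin_neBot, closure_Ico (ne_of_lt haT)]
      exact right_mem_Icc.mpr haT.le
    have htend : Tendsto (fun t => ENNReal.ofReal (Real.exp (-s * g t))) (nhdsWithin a (Ico T a))
        (nhds (ENNReal.ofReal (Real.exp (-s * g a)))) := by
      apply Tendsto.mono_left _ nhdsWithin_le_nhds
      exact (ENNReal.continuous_ofReal.comp
        (Real.continuous_exp.comp (continuous_const.mul hgc))).tendsto a
    have hlim : μ {ω | a ≤ Z ω} ≤ ENNReal.ofReal (Real.exp (-s * g a)) :=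
      ge_of_tendsto htend (eventually_mem_nhdsWithin.mono fun t ht => key t ht)
    calc μ {ω | u ≤ g (Z ω)} ≤ μ {ω | a ≤ Z ω} := measure_mono hsub
      _ ≤ ENNReal.ofReal (Real.exp (-s * g a)) := hlim
      _ ≤ _ := by
          apply ENNReal.ofReal_le_ofReal
          have h1 : Real.exp (-s * g a) ≤ Real.exp (-s * u) :=
            Real.exp_le_exp.mpr (by nlinarith)
          have h2 : (1:ℝ) ≤ Real.exp (s * v₀) := Real.one_le_exp (by positivity)
          nlinarith [Real.exp_nonneg (-s * u), Real.exp_nonneg (-s * g a)]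

lemma easy_aux {h : ℝ → ℝ} (hh : Tendsto h atTop atTop)
    {p q : ℝ → ℝ} {κ : ℝ} (hκ : 0 < κ)
    (hpq : ∀ᶠ x in atTop, 0 < q x ∧ q x * κ ≤ p x) :
    liminf (fun x : ℝ => ((-Real.log (p x) / h x : ℝ) : EReal)) atTop
      ≤ liminf (fun x : ℝ => ((-Real.log (q x) / h x : ℝ) : EReal)) atTop := by
  by_contra hlt
  push_neg at hlt
  obtain ⟨c, hc1, hc2⟩ := EReal.exists_between_coe_real hlt
  obtain ⟨c', hc1', hc2'⟩ := EReal.exists_between_coe_real hc1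
  have hcc' : c' < c := by exact_mod_cast hc2'
  have hfreq : ∃ᶠ x in atTop, ((-Real.log (q x) / h x : ℝ) : EReal) < (c' : EReal) :=
    frequently_lt_of_liminf_lt (by isBoundedDefault) hc1'
  have hev : ∀ᶠ x in atTop, 0 < h x ∧ (0 < q x ∧ q x * κ ≤ p x) ∧ -Real.log κ / h x < c - c' := by
    have h1 : ∀ᶠ x in atTop, 0 < h x := hh.eventually_gt_atTop 0
    have h2 : Tendsto (fun x => -Real.log κ / h x) atTop (nhds 0) :=
      Tendsto.div_atTop tendsto_const_nhds hh
    have h3 : ∀ᶠ x in atTop, -Real.log κ / h x < c - c' :=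
      h2.eventually_lt_const (by linarith)
    exact h1.and (hpq.and h3)
  have : ∃ᶠ x in atTop, ((-Real.log (p x) / h x : ℝ) : EReal) ≤ (c : EReal) := by
    refine (hfreq.and_eventually hev).mono ?_
    rintro x ⟨hq, hhx, ⟨hq0, hineq⟩, hεx⟩
    have hq' : -Real.log (q x) / h x < c' := by exact_mod_cast hq
    have hp0 : 0 < p x := lt_of_lt_of_le (by positivity) hineq
    have hlog : Real.log (q x) + Real.log κ ≤ Real.log (p x) := by
      rw [← Real.log_mul (ne_of_gt hq0) (ne_of_gt hκ)]
      exact Real.log_le_log (by positivity) hineq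
    have : -Real.log (p x) / h x ≤ -Real.log (q x) / h x + -Real.log κ / h x := by
      rw [← add_div]
      apply div_le_div_of_nonneg_right ?_ hhx.le
      · linarith
    have hfin : -Real.log (p x) / h x ≤ c := by linarith
    exact_mod_cast hfin
  exact absurd (liminf_le_of_frequently_le' this) (not_le.mpr hc2)

set_option maxHeartbeats 1000000 in
theorem stmt7 {Ω : Type*} [MeasurableSpace Ω] (μ : Measure Ω) [IsProbabilityMeasure μ]
    (X Y : Ω → ℝ) (hXpos : ∀ ω, 0 < X ω) (hYpos : ∀ ω, 0 < Y ω)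
    (hXub : ∀ a > (0 : ℝ), 0 < μ {ω | X ω > a})
    (hYub : ∀ a > (0 : ℝ), 0 < μ {ω | Y ω > a})
    (hXm : Measurable X) (hYm : Measurable Y)
    (hind : ProbabilityTheory.IndepFun X Y μ)
    (h : ℝ → ℝ) (hnn : ∀ x ≥ (0 : ℝ), 0 ≤ h x)
    (hcont : ContinuousOn h (Ici 0))
    (htop : Tendsto h atTop atTop)
    (hsub : ∀ a > (0 : ℝ), ∀ b > (0 : ℝ), h (a * b) ≤ h a + h b) :
    Filter.liminf
        (fun x : ℝ => ((-Real.log (μ {ω | X ω * Y ω > x}).toReal / h x : ℝ) : EReal)) atTop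
      = min
        (Filter.liminf
          (fun x : ℝ => ((-Real.log (μ {ω | X ω > x}).toReal / h x : ℝ) : EReal)) atTop)
        (Filter.liminf
          (fun x : ℝ => ((-Real.log (μ {ω | Y ω > x}).toReal / h x : ℝ) : EReal)) atTop) := by
  -- independence of threshold events
  have indXY : ∀ u v : ℝ, μ ({ω | X ω > u} ∩ {ω | Y ω > v})
      = μ {ω | X ω > u} * μ {ω | Y ω > v} := by
    intro u v
    exact hind.measure_inter_preimage_eq_mul (Ioi u) (Ioi v) measurableSet_Ioi measurableSet_Ioi
  have hsubXE : ∀ x : ℝ, 0 < x →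
      {ω | X ω > x} ∩ {ω | Y ω > 1} ⊆ {ω | X ω * Y ω > x} := by
    intro x hx ω hω
    have h1 : x < X ω := hω.1
    have h2 : (1:ℝ) < Y ω := hω.2
    have : x * 1 < X ω * Y ω := mul_lt_mul'' h1 h2 hx.le zero_le_one
    simpa using this
  have hsubYE : ∀ x : ℝ, 0 < x →
      {ω | X ω > 1} ∩ {ω | Y ω > x} ⊆ {ω | X ω * Y ω > x} := by
    intro x hx ω hω
    have h1 : (1:ℝ) < X ω := hω.1
    have h2 : x < Y ω := hω.2
    have : 1 * x < X ω * Y ω := mul_lt_mul'' h1 h2 zero_le_one hx.le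
    simpa using this
  have hElbX : ∀ x : ℝ, 0 < x → μ {ω | X ω > x} * μ {ω | Y ω > 1}
      ≤ μ {ω | X ω * Y ω > x} := fun x hx =>
    (indXY x 1).symm.trans_le (measure_mono (hsubXE x hx))
  have hElbY : ∀ x : ℝ, 0 < x → μ {ω | X ω > 1} * μ {ω | Y ω > x}
      ≤ μ {ω | X ω * Y ω > x} := fun x hx =>
    (indXY 1 x).symm.trans_le (measure_mono (hsubYE x hx))
  refine le_antisymm (le_min ?_ ?_) ?_
  · -- liminf fE ≤ liminf fX
    refine easy_aux htop (κ := (μ {ω | Y ω > 1}).toReal)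
      (ENNReal.toReal_pos (hYub 1 one_pos).ne' (measure_ne_top μ _)) ?_
    filter_upwards [eventually_gt_atTop (0:ℝ)] with x hx
    refine ⟨ENNReal.toReal_pos (hXub x hx).ne' (measure_ne_top μ _), ?_⟩
    rw [← ENNReal.toReal_mul]
    exact ENNReal.toReal_mono (measure_ne_top μ _) (hElbX x hx)
  · -- liminf fE ≤ liminf fY
    refine easy_aux htop (κ := (μ {ω | X ω > 1}).toReal)
      (ENNReal.toReal_pos (hXub 1 one_pos).ne' (measure_ne_top μ _)) ?_
    filter_upwards [eventually_gt_atTop (0:ℝ)] with x hx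
    refine ⟨ENNReal.toReal_pos (hYub x hx).ne' (measure_ne_top μ _), ?_⟩
    rw [← ENNReal.toReal_mul, mul_comm]
    exact ENNReal.toReal_mono (measure_ne_top μ _) (hElbY x hx)
  · -- hard direction
    by_contra hlt
    push_neg at hlt
    obtain ⟨c, hc1, hc2⟩ := EReal.exists_between_coe_real hlt
    refine absurd hc1 (not_lt.mpr ?_)
    refine le_liminf_of_le (by isBoundedDefault) ?_
    by_cases hc0 : c ≤ 0
    · filter_upwards [htop.eventually_gt_atTop 0] with x hx
      have hle1 : (μ {ω | X ω * Y ω > x}).toReal ≤ 1 := by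
        have h1 : μ {ω | X ω * Y ω > x} ≤ 1 := prob_le_one
        exact ENNReal.toReal_le_of_le_ofReal zero_le_one (by simpa using h1)
      have hnn' : (0:ℝ) ≤ -Real.log (μ {ω | X ω * Y ω > x}).toReal / h x := by
        apply div_nonneg _ hx.le
        rw [neg_nonneg]
        exact Real.log_nonpos ENNReal.toReal_nonneg hle1
      have hcle : (c:ℝ) ≤ -Real.log (μ {ω | X ω * Y ω > x}).toReal / h x := le_trans hc0 hnn'
      exact EReal.coe_le_coe_iff.mpr hcle
    · push_neg at hc0
      obtain ⟨s', hs1, hs2⟩ := EReal.exists_between_coe_real hc2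
      have hcs' : c < s' := by exact_mod_cast hs1
      have hs'pos : 0 < s' := lt_trans hc0 hcs'
      rw [lt_min_iff] at hs2
      obtain ⟨hs'X, hs'Y⟩ := hs2
      -- the continuous extension of h
      obtain ⟨g, hg⟩ : ∃ g : ℝ → ℝ, g = fun t => h (max t 0) := ⟨_, rfl⟩
      have hgc : Continuous g := by
        rw [hg]
        exact hcont.comp_continuous (continuous_id.max continuous_const)
          (fun t => le_max_right t 0)
      have hgeq : ∀ t : ℝ, 0 ≤ t → g t = h t := by
        intro t ht; rw [hg]; simp [max_eq_left ht]
      have hgtop : Tendsto g atTop atTop :=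
        htop.congr' ((eventually_ge_atTop (0:ℝ)).mono fun t ht => (hgeq t ht).symm)
      have hgnn : ∀ t, 0 ≤ g t := by
        intro t; rw [hg]; exact hnn _ (le_max_right t 0)
      have hgsub : ∀ a : ℝ, 0 < a → ∀ b : ℝ, 0 < b → g (a * b) ≤ g a + g b := by
        intro a ha b hb
        rw [hgeq _ (by positivity), hgeq _ ha.le, hgeq _ hb.le]
        exact hsub a ha b hb
      -- eventual tail bounds
      have hevX : ∀ᶠ t in atTop,
          (s' : EReal) < ((-Real.log (μ {ω | X ω > t}).toReal / h t : ℝ) : EReal) :=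
        eventually_lt_of_lt_liminf hs'X
      have hevY : ∀ᶠ t in atTop,
          (s' : EReal) < ((-Real.log (μ {ω | Y ω > t}).toReal / h t : ℝ) : EReal) :=
        eventually_lt_of_lt_liminf hs'Y
      obtain ⟨T, hT⟩ := eventually_atTop.mp
        ((hevX.and hevY).and ((htop.eventually_gt_atTop 0).and (eventually_ge_atTop (1:ℝ))))
      obtain ⟨T', hT'def⟩ : ∃ v : ℝ, v = max T 1 := ⟨_, rfl⟩
      have hT'1 : (1:ℝ) ≤ T' := by rw [hT'def]; exact le_max_right _ _
      have hT'pos : (0:ℝ) < T' := lt_of_lt_of_le one_pos hT'1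
      have hprops : ∀ t ≥ T', (s' : EReal) < ((-Real.log (μ {ω | X ω > t}).toReal / h t : ℝ) : EReal)
          ∧ (s' : EReal) < ((-Real.log (μ {ω | Y ω > t}).toReal / h t : ℝ) : EReal)
          ∧ 0 < h t ∧ 0 < t := by
        intro t ht
        rw [hT'def] at ht
        obtain ⟨⟨h1, h2⟩, h3, h4⟩ := hT t (le_trans (le_max_left _ _) ht)
        exact ⟨h1, h2, h3, lt_of_lt_of_le one_pos h4⟩
      have htailgen : ∀ (Z : Ω → ℝ), (∀ t ≥ T', 0 < μ {ω | Z ω > t}) →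
          (∀ t ≥ T', (s' : EReal) < ((-Real.log (μ {ω | Z ω > t}).toReal / h t : ℝ) : EReal)) →
          ∀ t ≥ T', μ {ω | Z ω > t} ≤ ENNReal.ofReal (Real.exp (-s' * g t)) := by
        intro Z hZpos' hZev t ht
        have h3 := (hprops t ht).2.2.1
        have h4 := (hprops t ht).2.2.2
        have hXr : s' < -Real.log (μ {ω | Z ω > t}).toReal / h t := by exact_mod_cast hZev t ht
        have hq0 : 0 < (μ {ω | Z ω > t}).toReal :=
          ENNReal.toReal_pos (hZpos' t ht).ne' (measure_ne_top μ _)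
        have hlog : Real.log (μ {ω | Z ω > t}).toReal < -s' * h t := by
          have := (lt_div_iff₀ h3).mp hXr
          linarith
        have hval : (μ {ω | Z ω > t}).toReal < Real.exp (-s' * h t) := by
          calc (μ {ω | Z ω > t}).toReal = Real.exp (Real.log (μ {ω | Z ω > t}).toReal) :=
                (Real.exp_log hq0).symm
            _ < _ := Real.exp_lt_exp.mpr hlog
        rw [hgeq t h4.le]
        calc μ {ω | Z ω > t} = ENNReal.ofReal (μ {ω | Z ω > t}).toReal :=
              (ENNReal.ofReal_toReal (measure_ne_top μ _)).symm
          _ ≤ _ := ENNReal.ofReal_le_ofReal hval.le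
      have htailX : ∀ t ≥ T', μ {ω | X ω > t} ≤ ENNReal.ofReal (Real.exp (-s' * g t)) :=
        htailgen X (fun t ht => hXub t (hprops t ht).2.2.2) (fun t ht => (hprops t ht).1)
      have htailY : ∀ t ≥ T', μ {ω | Y ω > t} ≤ ENNReal.ofReal (Real.exp (-s' * g t)) :=
        htailgen Y (fun t ht => hYub t (hprops t ht).2.2.2) (fun t ht => (hprops t ht).2.1)
      -- sup of g on [0, T']
      obtain ⟨z, hz, hzmax⟩ := isCompact_Icc.exists_isMaxOn
        (nonempty_Icc.mpr hT'pos.le) hgc.continuousOn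
      obtain ⟨v₀, hv₀def⟩ : ∃ v : ℝ, v = g z := ⟨_, rfl⟩
      have hv0nn : 0 ≤ v₀ := hv₀def ▸ hgnn z
      have hv₀ : ∀ t ≤ T', g t ≤ v₀ := by
        intro t ht
        have heq : g t = g (max t 0) := by
          rw [hg]; simp [max_comm, max_assoc]
        rw [heq, hv₀def]
        exact hzmax ⟨le_max_right _ _, max_le ht hT'pos.le⟩
      obtain ⟨A, hA⟩ : ∃ a : ℝ, a = Real.exp (s' * v₀) := ⟨_, rfl⟩
      have tailX : ∀ u : ℝ, μ {ω | u ≤ g (X ω)} ≤ ENNReal.ofReal (A * Real.exp (-s' * u)) := by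
        simp only [hA]; exact tail_conv μ hgc hgtop hs'pos hv0nn hv₀ htailX
      have tailY : ∀ u : ℝ, μ {ω | u ≤ g (Y ω)} ≤ ENNReal.ofReal (A * Real.exp (-s' * u)) := by
        simp only [hA]; exact tail_conv μ hgc hgtop hs'pos hv0nn hv₀ htailY
      have hA1 : (1:ℝ) ≤ A := by rw [hA]; exact Real.one_le_exp (by positivity)
      have hApos : (0:ℝ) < A := lt_of_lt_of_le one_pos hA1
      -- subadditivity consequence
      have keysub : ∀ x : ℝ, 0 < x → ∀ z' : ℝ, x ≤ z' → g x ≤ g z' + v₀ := by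
        intro x hx z' hz'
        have hz'0 : 0 < z' := lt_of_lt_of_le hx hz'
        have hq1 : x / z' ≤ 1 := (div_le_one hz'0).mpr hz'
        have hq0 : 0 < x / z' := by positivity
        have hxeq : x = z' * (x / z') := by field_simp
        calc g x = h x := hgeq x hx.le
          _ = h (z' * (x / z')) := by rw [← hxeq]
          _ ≤ h z' + h (x / z') := hsub z' hz'0 (x / z') hq0
          _ ≤ g z' + v₀ := by
              rw [← hgeq z' hz'0.le, ← hgeq (x / z') hq0.le]
              have := hv₀ (x / z') (le_trans hq1 hT'1)
              linarith
      -- choose n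
      have hδpos : 0 < s' - c := by linarith
      obtain ⟨n, hn⟩ := exists_nat_gt (s' / (s' - c))
      have hnpos : (0:ℝ) < n := lt_trans (by positivity) hn
      obtain ⟨τ, hτ⟩ : ∃ t : ℝ, t = s' - s' / n := ⟨_, rfl⟩
      have hτc : c < τ := by
        have h1 : s' < (n:ℝ) * (s' - c) := by
          rw [div_lt_iff₀ hδpos] at hn; linarith
        have h2 : s' / n < s' - c := by
          rw [div_lt_iff₀ hnpos]; nlinarith
        rw [hτ]; linarith
      have hτs' : τ ≤ s' := by
        rw [hτ]
        have : 0 ≤ s' / n := by positivity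
        linarith
      obtain ⟨B, hB⟩ : ∃ b : ℝ, b = ((n:ℝ) + 1) * (A * A * Real.exp (s' * v₀)) := ⟨_, rfl⟩
      have hBpos : (0:ℝ) < B := by
        rw [hB]
        exact mul_pos (by positivity) (mul_pos (mul_pos hApos hApos) (Real.exp_pos _))
      -- main quantitative bound
      have main : ∀ x : ℝ, T' ≤ x →
          μ {ω | X ω * Y ω > x} ≤ ENNReal.ofReal (B * Real.exp (-τ * h x)) := by
        intro x hx
        have hx0 : 0 < x := lt_of_lt_of_le hT'pos hx
        obtain ⟨w, hw⟩ : ∃ w : ℝ, w = h x := ⟨_, rfl⟩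
        rw [← hw]
        have hwg : g x = w := by rw [hw]; exact hgeq x hx0.le
        have hwnn : 0 ≤ w := hw ▸ hnn x hx0.le
        have hcover : {ω | X ω * Y ω > x} ⊆
            (⋃ k ∈ Finset.range n, (X ⁻¹' (g ⁻¹' Ici ((k:ℝ) * w / n))
              ∩ Y ⁻¹' (g ⁻¹' Ici (w - v₀ - ((k:ℝ) + 1) * w / n))))
            ∪ X ⁻¹' (g ⁻¹' Ici w) := by
          intro ω hω
          have hXY : x < X ω * Y ω := hω
          have hgXY : w ≤ g (X ω * Y ω) + v₀ := by
            have := keysub x hx0 (X ω * Y ω) hXY.le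
            rw [hwg] at this; exact this
          have hsplit : g (X ω * Y ω) ≤ g (X ω) + g (Y ω) :=
            hgsub _ (hXpos ω) _ (hYpos ω)
          by_cases hcase : w ≤ g (X ω)
          · right; exact hcase
          · left
            push_neg at hcase
            have hr0 : 0 ≤ g (X ω) := hgnn _
            have hwpos : 0 < w := lt_of_le_of_lt hr0 hcase
            obtain ⟨k, hk⟩ : ∃ k : ℕ, k = ⌊g (X ω) * n / w⌋₊ := ⟨_, rfl⟩
            have hfl : (k:ℝ) * w ≤ g (X ω) * n := by
              rw [hk, ← le_div_iff₀ hwpos]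
              exact Nat.floor_le (by positivity)
            have hfl2 : g (X ω) * n < ((k:ℝ) + 1) * w := by
              rw [hk, ← div_lt_iff₀ hwpos]
              exact Nat.lt_floor_add_one _
            have hkn : k < n := by
              have hgn : g (X ω) * n < w * n := by
                exact mul_lt_mul_of_pos_right hcase hnpos
              have : (k:ℝ) < n := by nlinarith
              exact_mod_cast this
            refine Set.mem_biUnion (Finset.mem_range.mpr hkn) ⟨?_, ?_⟩
            · show (k:ℝ) * w / n ≤ g (X ω)
              rw [div_le_iff₀ hnpos]
              linarith
            · show w - v₀ - ((k:ℝ) + 1) * w / n ≤ g (Y ω)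
              have hr2 : g (X ω) < ((k:ℝ) + 1) * w / n := by
                rw [lt_div_iff₀ hnpos]
                linarith
              linarith
        have hmeas : ∀ u : ℝ, MeasurableSet (g ⁻¹' Ici u) :=
          fun u => (isClosed_Ici.preimage hgc).measurableSet
        obtain ⟨D, hD⟩ : ∃ d : ℝ, d = A * A * Real.exp (s' * v₀) * Real.exp (-τ * w) := ⟨_, rfl⟩
        have hDpos : (0:ℝ) < D := by
          rw [hD]
          exact mul_pos (mul_pos (mul_pos hApos hApos) (Real.exp_pos _)) (Real.exp_pos _)
        have hterm : ∀ k : ℕ,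
            (A * Real.exp (-s' * ((k:ℝ) * w / n))) *
              (A * Real.exp (-s' * (w - v₀ - ((k:ℝ) + 1) * w / n))) = D := by
          intro k
          have hexp : Real.exp (-s' * ((k:ℝ) * w / n)) *
              Real.exp (-s' * (w - v₀ - ((k:ℝ) + 1) * w / n))
              = Real.exp (s' * v₀) * Real.exp (-τ * w) := by
            rw [← Real.exp_add, ← Real.exp_add]
            congr 1
            rw [hτ]
            field_simp
            ring
          calc (A * Real.exp (-s' * ((k:ℝ) * w / n))) *
              (A * Real.exp (-s' * (w - v₀ - ((k:ℝ) + 1) * w / n)))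
              = A * A * (Real.exp (-s' * ((k:ℝ) * w / n)) *
                Real.exp (-s' * (w - v₀ - ((k:ℝ) + 1) * w / n))) := by ring
            _ = D := by rw [hexp, hD]; ring
        calc μ {ω | X ω * Y ω > x}
            ≤ μ ((⋃ k ∈ Finset.range n, (X ⁻¹' (g ⁻¹' Ici ((k:ℝ) * w / n))
              ∩ Y ⁻¹' (g ⁻¹' Ici (w - v₀ - ((k:ℝ) + 1) * w / n))))
              ∪ X ⁻¹' (g ⁻¹' Ici w)) := measure_mono hcover
          _ ≤ μ (⋃ k ∈ Finset.range n, (X ⁻¹' (g ⁻¹' Ici ((k:ℝ) * w / n))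
              ∩ Y ⁻¹' (g ⁻¹' Ici (w - v₀ - ((k:ℝ) + 1) * w / n))))
              + μ (X ⁻¹' (g ⁻¹' Ici w)) := measure_union_le _ _
          _ ≤ (∑ k ∈ Finset.range n, μ (X ⁻¹' (g ⁻¹' Ici ((k:ℝ) * w / n))
              ∩ Y ⁻¹' (g ⁻¹' Ici (w - v₀ - ((k:ℝ) + 1) * w / n))))
              + μ (X ⁻¹' (g ⁻¹' Ici w)) := by
              gcongr
              exact measure_biUnion_finset_le _ _
          _ ≤ (∑ _k ∈ Finset.range n, ENNReal.ofReal D) + ENNReal.ofReal D := by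
              gcongr with k hk
              · rw [hind.measure_inter_preimage_eq_mul _ _ (hmeas _) (hmeas _)]
                rw [← hterm k, ENNReal.ofReal_mul (by positivity)]
                exact mul_le_mul' (tailX _) (tailY _)
              · refine le_trans (tailX w) (ENNReal.ofReal_le_ofReal ?_)
                rw [hD]
                have h1 : Real.exp (-s' * w) ≤ Real.exp (-τ * w) :=
                  Real.exp_le_exp.mpr (by nlinarith)
                have h2 : (1:ℝ) ≤ A * Real.exp (s' * v₀) := by
                  nlinarith [hA1, Real.one_le_exp (show (0:ℝ) ≤ s' * v₀ by positivity)]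
                have h3 := mul_le_mul_of_nonneg_left h1 hApos.le
                have h4 := mul_le_mul_of_nonneg_right h2
                  (mul_nonneg hApos.le (Real.exp_nonneg (-τ * w)))
                nlinarith [h3, h4]
          _ = ENNReal.ofReal (B * Real.exp (-τ * w)) := by
              rw [Finset.sum_const, Finset.card_range, nsmul_eq_mul]
              rw [← ENNReal.ofReal_natCast n, ← ENNReal.ofReal_mul (by positivity),
                ← ENNReal.ofReal_add (by positivity) hDpos.le]
              congr 1
              rw [hD, hB]; ring
      -- conclude
      have htend2 : Tendsto (fun x => h x * (τ - c)) atTop atTop :=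
        htop.atTop_mul_const (by linarith)
      filter_upwards [eventually_ge_atTop T', htend2.eventually_ge_atTop (Real.log B),
        htop.eventually_gt_atTop 0] with x hx1 hx2 hx3
      have hb := main x hx1
      have hx0 : 0 < x := lt_of_lt_of_le hT'pos hx1
      have hp0 : 0 < (μ {ω | X ω * Y ω > x}).toReal := by
        have hμ : 0 < μ {ω | X ω * Y ω > x} := by
          calc (0:ENNReal) < μ {ω | X ω > x} * μ {ω | Y ω > 1} :=
                ENNReal.mul_pos (hXub x hx0).ne' (hYub 1 one_pos).ne'
            _ ≤ _ := hElbX x hx0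
        exact ENNReal.toReal_pos hμ.ne' (measure_ne_top μ _)
      have hple : (μ {ω | X ω * Y ω > x}).toReal ≤ B * Real.exp (-τ * h x) :=
        ENNReal.toReal_le_of_le_ofReal (by positivity) hb
      have hlogle : Real.log (μ {ω | X ω * Y ω > x}).toReal ≤ Real.log B + (-τ * h x) := by
        calc Real.log (μ {ω | X ω * Y ω > x}).toReal
            ≤ Real.log (B * Real.exp (-τ * h x)) := Real.log_le_log hp0 hple
          _ = Real.log B + (-τ * h x) := by
              rw [Real.log_mul hBpos.ne' (Real.exp_ne_zero _), Real.log_exp]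
      have hfinal : c ≤ -Real.log (μ {ω | X ω * Y ω > x}).toReal / h x := by
        rw [le_div_iff₀ hx3]
        nlinarith
      exact_mod_cast hfinal
end

section
/- Let X and Y be positive heavy-tailed random variables (not necessarily independent) with concave natural scales h_X and h_Y respectively, where h_Y(0) = 0, h_Y(x) → ∞ as x → ∞, and suppose lim_{x→∞} h_X(x)/h_Y(x) = ∞. Then 1/2 ≤ liminf_{x→∞} R_{X+Y}(x)/h_Y(x) ≤ 1; in particular, there is a constant c ∈ [1, 2] such that c·h_Y is a natural scale of X+Y. -/
open MeasureTheory Filter Set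

theorem stmt8 {Ω : Type*} [MeasurableSpace Ω] (μ : Measure Ω) [IsProbabilityMeasure μ]
    (X Y : Ω → ℝ) (hXpos : ∀ ω, 0 < X ω) (hYpos : ∀ ω, 0 < Y ω)
    (hXub : ∀ a > (0 : ℝ), 0 < μ {ω | X ω > a})
    (hYub : ∀ a > (0 : ℝ), 0 < μ {ω | Y ω > a})
    (hXheavy : ∀ s > (0 : ℝ), ∫⁻ ω, ENNReal.ofReal (Real.exp (s * X ω)) ∂μ = ⊤)
    (hYheavy : ∀ s > (0 : ℝ), ∫⁻ ω, ENNReal.ofReal (Real.exp (s * Y ω)) ∂μ = ⊤)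
    (hX hY : ℝ → ℝ)
    (hXconc : ConcaveOn ℝ (Ici 0) hX) (hYconc : ConcaveOn ℝ (Ici 0) hY)
    (hY0 : hY 0 = 0) (hYnn : ∀ x ≥ (0 : ℝ), 0 ≤ hY x)
    (hYtop : Tendsto hY atTop atTop)
    (hXnat : Filter.liminf
        (fun x : ℝ => ((-Real.log (μ {ω | X ω > x}).toReal / hX x : ℝ) : EReal)) atTop = 1)
    (hYnat : Filter.liminf
        (fun x : ℝ => ((-Real.log (μ {ω | Y ω > x}).toReal / hY x : ℝ) : EReal)) atTop = 1)
    (hratio : Tendsto (fun x => hX x / hY x) atTop atTop) :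
    ((1 / 2 : ℝ) : EReal) ≤ Filter.liminf
        (fun x : ℝ =>
          ((-Real.log (μ {ω | X ω + Y ω > x}).toReal / hY x : ℝ) : EReal)) atTop ∧
    Filter.liminf
        (fun x : ℝ =>
          ((-Real.log (μ {ω | X ω + Y ω > x}).toReal / hY x : ℝ) : EReal)) atTop ≤ 1 ∧
    ∃ c ∈ Icc (1 : ℝ) 2,
      Filter.liminf
        (fun x : ℝ =>
          ((-Real.log (μ {ω | X ω + Y ω > x}).toReal / (c * hY x) : ℝ) : EReal)) atTop
        = 1 := by
  have hfin : ∀ s : Set Ω, μ s ≠ ⊤ := fun s => measure_ne_top μ s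
  -- positivity of tails
  have hYpos' : ∀ a > (0:ℝ), 0 < (μ {ω | Y ω > a}).toReal := fun a ha =>
    ENNReal.toReal_pos (hYub a ha).ne' (hfin _)
  have hXpos' : ∀ a > (0:ℝ), 0 < (μ {ω | X ω > a}).toReal := fun a ha =>
    ENNReal.toReal_pos (hXub a ha).ne' (hfin _)
  -- monotonicity P(Y>x) ≤ P(X+Y>x)
  have hmono : ∀ x : ℝ, (μ {ω | Y ω > x}).toReal ≤ (μ {ω | X ω + Y ω > x}).toReal := by
    intro x
    refine ENNReal.toReal_mono (hfin _) (measure_mono fun ω hω => ?_)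
    have := hXpos ω
    simp only [mem_setOf_eq] at hω ⊢
    linarith
  have hSpos : ∀ x > (0:ℝ), 0 < (μ {ω | X ω + Y ω > x}).toReal := fun x hx =>
    lt_of_lt_of_le (hYpos' x hx) (hmono x)
  -- concavity gives superhomogeneity
  have concY : ∀ t x : ℝ, 0 ≤ t → t ≤ 1 → 0 ≤ x → t * hY x ≤ hY (t * x) := by
    intro t x ht ht1 hx
    have h := hYconc.2 (x := x) (y := 0) hx (le_refl (0:ℝ)) ht (by linarith : (0:ℝ) ≤ 1 - t)
      (by ring)
    simpa [hY0, smul_eq_mul] using h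
  -- eventual lower bounds from the natural-scale hypotheses
  have evhY : ∀ᶠ x in atTop, 0 < hY x := hYtop.eventually_gt_atTop 0
  have evY : ∀ ε : ℝ, 0 < ε → ∀ᶠ y in atTop,
      (1 - ε) * hY y ≤ -Real.log (μ {ω | Y ω > y}).toReal := by
    intro ε hε
    have h1 : ((1 - ε : ℝ) : EReal) < Filter.liminf
        (fun x : ℝ => ((-Real.log (μ {ω | Y ω > x}).toReal / hY x : ℝ) : EReal)) atTop := by
      rw [hYnat, ← EReal.coe_one]; exact_mod_cast (by linarith : (1:ℝ) - ε < 1)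
    filter_upwards [eventually_lt_of_lt_liminf h1, evhY] with y h hy
    have h' : (1 - ε : ℝ) < -Real.log (μ {ω | Y ω > y}).toReal / hY y := by
      exact_mod_cast h
    nlinarith [(lt_div_iff₀ hy).mp h']
  have evX : ∀ᶠ y in atTop, (1/2) * hX y ≤ -Real.log (μ {ω | X ω > y}).toReal := by
    have h1 : ((1/2 : ℝ) : EReal) < Filter.liminf
        (fun x : ℝ => ((-Real.log (μ {ω | X ω > x}).toReal / hX x : ℝ) : EReal)) atTop := by
      rw [hXnat, ← EReal.coe_one]; exact_mod_cast (by norm_num : (1:ℝ)/2 < 1)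
    have evhX : ∀ᶠ y in atTop, 0 < hX y := by
      filter_upwards [hratio.eventually_gt_atTop 0, evhY] with y h hy
      have := (div_pos_iff.mp h)
      rcases this with ⟨h1, _⟩ | ⟨_, h2⟩
      · exact h1
      · linarith
    filter_upwards [eventually_lt_of_lt_liminf h1, evhX] with y h hy
    have h' : (1/2 : ℝ) < -Real.log (μ {ω | X ω > y}).toReal / hX y := by
      exact_mod_cast h
    nlinarith [(lt_div_iff₀ hy).mp h']
  -- from a lower bound on -log p, a bound p ≤ exp(-t)
  have tail_le : ∀ p t : ℝ, 0 < p → t ≤ -Real.log p → p ≤ Real.exp (-t) := by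
    intro p t hp h
    calc p = Real.exp (Real.log p) := (Real.exp_log hp).symm
    _ ≤ Real.exp (-t) := Real.exp_le_exp.mpr (by linarith)
  -- UPPER BOUND : liminf ≤ 1
  have key_le : ∀ᶠ x in atTop,
      ((-Real.log (μ {ω | X ω + Y ω > x}).toReal / hY x : ℝ) : EReal) ≤
      ((-Real.log (μ {ω | Y ω > x}).toReal / hY x : ℝ) : EReal) := by
    filter_upwards [eventually_gt_atTop (0:ℝ), evhY] with x hx hy
    rw [EReal.coe_le_coe_iff]
    have hl : Real.log (μ {ω | Y ω > x}).toReal ≤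
        Real.log (μ {ω | X ω + Y ω > x}).toReal :=
      Real.log_le_log (hYpos' x hx) (hmono x)
    exact div_le_div_of_nonneg_right (by linarith) hy.le
  have upper : Filter.liminf
      (fun x : ℝ => ((-Real.log (μ {ω | X ω + Y ω > x}).toReal / hY x : ℝ) : EReal)) atTop
      ≤ 1 := by
    rw [← hYnat]
    exact liminf_le_liminf key_le
  -- LOWER BOUND : 1 ≤ liminf
  have lower : (1 : EReal) ≤ Filter.liminf
      (fun x : ℝ => ((-Real.log (μ {ω | X ω + Y ω > x}).toReal / hY x : ℝ) : EReal)) atTop := by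
    rw [le_liminf_iff]
    intro c hc
    -- reduce to a real bound b with 0 ≤ b < 1
    obtain ⟨b, hb0, hb1, hcb⟩ : ∃ b : ℝ, 0 ≤ b ∧ b < 1 ∧ c ≤ (b : EReal) := by
      induction c using EReal.rec with
      | bot => exact ⟨0, le_refl 0, one_pos, bot_le⟩
      | coe r =>
        have hr : r < 1 := by
          rw [← EReal.coe_one] at hc; exact_mod_cast hc
        exact ⟨max r 0, le_max_right _ _, max_lt hr one_pos,
          EReal.coe_le_coe_iff.mpr (le_max_left _ _)⟩
      | top => exact absurd hc (by simp)
    have hsuff : ∀ᶠ x in atTop,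
        (b : EReal) < ((-Real.log (μ {ω | X ω + Y ω > x}).toReal / hY x : ℝ) : EReal) := by
      set s : ℝ := (1 + b) / 2 with hs_def
      set δ : ℝ := (1 - s) / 2 with hδ_def
      have hbs : b < s := by rw [hs_def]; linarith
      have hs1 : s < 1 := by rw [hs_def]; linarith
      have hδ : 0 < δ := by rw [hδ_def]; linarith
      have hδ1 : δ < 1 := by rw [hδ_def]; linarith
      have hδs : s ≤ (1 - δ) * (1 - δ) := by nlinarith [sq_nonneg δ]
      have htδ : Tendsto (fun x : ℝ => δ * x) atTop atTop :=
        tendsto_id.const_mul_atTop hδ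
      have ht1δ : Tendsto (fun x : ℝ => (1 - δ) * x) atTop atTop :=
        tendsto_id.const_mul_atTop (by linarith)
      -- eventual bound on hX in terms of hY
      have evXY : ∀ᶠ y in atTop, (2/δ) * hY y ≤ hX y := by
        filter_upwards [hratio.eventually_ge_atTop (2/δ), evhY] with y h hy
        calc (2/δ) * hY y ≤ (hX y / hY y) * hY y := by
              exact mul_le_mul_of_nonneg_right h hy.le
        _ = hX y := by field_simp
      have hE3 := ht1δ.eventually (evY δ hδ)
      have hE4 := htδ.eventually evX
      have hE5 := htδ.eventually evXY
      have hE6 : ∀ᶠ x in atTop, Real.log 2 < (s - b) * hY x := by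
        filter_upwards [hYtop.eventually_gt_atTop (Real.log 2 / (s - b))] with x hx
        have hsb : (0:ℝ) < s - b := by linarith
        exact (div_lt_iff₀ hsb).mp (by linarith [hx]) |>.trans_eq (mul_comm _ _)
      filter_upwards [eventually_gt_atTop (0:ℝ), evhY, hE3, hE4, hE5, hE6]
        with x hx0 hy hY1 hX1 hX2 hlog2
      -- tail bound for Y part
      have hYtail : (μ {ω | Y ω > (1 - δ) * x}).toReal ≤ Real.exp (-(s * hY x)) := by
        refine tail_le _ _ (hYpos' _ (mul_pos (by linarith) hx0)) ?_
        calc s * hY x ≤ ((1 - δ) * (1 - δ)) * hY x :=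
              mul_le_mul_of_nonneg_right hδs hy.le
        _ = (1 - δ) * ((1 - δ) * hY x) := by ring
        _ ≤ (1 - δ) * hY ((1 - δ) * x) :=
              mul_le_mul_of_nonneg_left (concY (1 - δ) x (by linarith) (by linarith) hx0.le)
                (by linarith)
        _ ≤ _ := hY1
      -- tail bound for X part
      have hXtail : (μ {ω | X ω > δ * x}).toReal ≤ Real.exp (-(s * hY x)) := by
        refine tail_le _ _ (hXpos' _ (by positivity)) ?_
        calc s * hY x ≤ 1 * hY x := mul_le_mul_of_nonneg_right hs1.le hy.le
        _ = (1/δ) * (δ * hY x) := by field_simp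
        _ ≤ (1/δ) * hY (δ * x) :=
              mul_le_mul_of_nonneg_left (concY δ x hδ.le hδ1.le hx0.le)
                (by positivity)
        _ = (1/2) * ((2/δ) * hY (δ * x)) := by field_simp
        _ ≤ (1/2) * hX (δ * x) := mul_le_mul_of_nonneg_left hX2 (by norm_num)
        _ ≤ _ := hX1
      -- union bound
      have hsplit : (μ {ω | X ω + Y ω > x}).toReal ≤
          (μ {ω | X ω > δ * x}).toReal + (μ {ω | Y ω > (1 - δ) * x}).toReal := by
        have hsub : {ω | X ω + Y ω > x} ⊆ {ω | X ω > δ * x} ∪ {ω | Y ω > (1 - δ) * x} := by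
          intro ω hω
          by_contra h
          simp only [mem_setOf_eq, mem_union, not_or, not_lt] at h hω
          obtain ⟨h1, h2⟩ := h
          have : X ω + Y ω ≤ δ * x + (1 - δ) * x := add_le_add h1 h2
          nlinarith
        calc (μ {ω | X ω + Y ω > x}).toReal
            ≤ (μ ({ω | X ω > δ * x} ∪ {ω | Y ω > (1 - δ) * x})).toReal :=
              ENNReal.toReal_mono (hfin _) (measure_mono hsub)
        _ ≤ (μ {ω | X ω > δ * x} + μ {ω | Y ω > (1 - δ) * x}).toReal :=
              ENNReal.toReal_mono (by
                exact ENNReal.add_ne_top.mpr ⟨hfin _, hfin _⟩) (measure_union_le _ _)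
        _ = _ := ENNReal.toReal_add (hfin _) (hfin _)
      have hP2 : (μ {ω | X ω + Y ω > x}).toReal ≤ 2 * Real.exp (-(s * hY x)) := by
        calc (μ {ω | X ω + Y ω > x}).toReal
            ≤ (μ {ω | X ω > δ * x}).toReal + (μ {ω | Y ω > (1 - δ) * x}).toReal := hsplit
        _ ≤ 2 * Real.exp (-(s * hY x)) := by linarith
      have hPpos := hSpos x hx0
      have hlogP : Real.log (μ {ω | X ω + Y ω > x}).toReal ≤ Real.log 2 - s * hY x := by
        calc Real.log (μ {ω | X ω + Y ω > x}).toReal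
            ≤ Real.log (2 * Real.exp (-(s * hY x))) := Real.log_le_log hPpos hP2
        _ = Real.log 2 + (-(s * hY x)) := by
              rw [Real.log_mul (by norm_num) (Real.exp_ne_zero _), Real.log_exp]
        _ = Real.log 2 - s * hY x := by ring
      have hfinal : b < -Real.log (μ {ω | X ω + Y ω > x}).toReal / hY x := by
        rw [lt_div_iff₀ hy]
        nlinarith
      exact_mod_cast hfinal
    exact hsuff.mono fun x hx => lt_of_le_of_lt hcb hx
  -- combine
  have heq : Filter.liminf
      (fun x : ℝ => ((-Real.log (μ {ω | X ω + Y ω > x}).toReal / hY x : ℝ) : EReal)) atTop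
      = 1 := le_antisymm upper lower
  refine ⟨le_trans (by rw [← EReal.coe_one, EReal.coe_le_coe_iff]; norm_num) lower, upper,
    1, ⟨le_refl 1, one_le_two⟩, ?_⟩
  convert heq using 3 with x
  rw [one_mul]
end

section
/- Let n ≥ 2 and X, X_1, ..., X_n be positive heavy-tailed i.i.d. random variables with common continuous distribution function F, and let g : ℝⁿ → ℝ be increasing in each coordinate with each coordinatewise section tending to ∞, and suppose the diagonal g_d(x) := g(x,...,x) has an inverse g_d^{-1}. Set ĥ := R_X ∘ g_d^{-1} where R_X(x) = -log P(X > x). Then 1 ≤ liminf_{x→∞} R_{g(X_1,...,X_n)}(x)/ĥ(x) ≤ n; in particular there is c ∈ [1, n] such that c·(R_X ∘ g_d^{-1}) is a natural scale of g(X_1,...,X_n). -/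
open MeasureTheory Filter Set
open scoped ENNReal Topology

/-- Coordinatewise monotone implies monotone for the pointwise order. -/
lemma gmono_aux {n : ℕ} (g : (Fin n → ℝ) → ℝ)
    (hmono : ∀ (v : Fin n → ℝ) (i : Fin n), Monotone (fun t => g (Function.update v i t)))
    {v w : Fin n → ℝ} (h : ∀ i, v i ≤ w i) : g v ≤ g w := by
  classical
  have key : ∀ s : Finset (Fin n), g v ≤ g (s.piecewise w v) := by
    intro s
    induction s using Finset.induction_on with
    | empty => simp
    | insert j s hj ih =>
      refine ih.trans ?_
      rw [Finset.piecewise_insert]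
      have h1 : g (s.piecewise w v) =
          g (Function.update (s.piecewise w v) j (s.piecewise w v j)) := by
        rw [Function.update_eq_self]
      rw [h1]
      refine hmono (s.piecewise w v) j ?_
      by_cases hjs : j ∈ s
      · simp [Finset.piecewise_eq_of_mem _ _ _ hjs]
      · simp [Finset.piecewise_eq_of_notMem _ _ _ hjs, h j]
  simpa using key Finset.univ

lemma ermul_le_mul_left {r : ℝ} (hr : 0 < r) :
    ∀ {x y : EReal}, x ≤ y → (r : EReal) * x ≤ (r : EReal) * y := by
  intro x y h
  induction x using EReal.rec with
  | bot => simp [EReal.coe_mul_bot_of_pos hr]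
  | coe a =>
    induction y using EReal.rec with
    | bot => exact absurd h (by simp)
    | coe b =>
      rw [← EReal.coe_mul, ← EReal.coe_mul]
      exact_mod_cast mul_le_mul_of_nonneg_left (by exact_mod_cast h) hr.le
    | top => simp [EReal.coe_mul_top_of_pos hr, le_top]
  | top =>
    have hy : y = ⊤ := top_le_iff.mp h
    simp [hy]

/-- Multiplication by a positive real constant as an order isomorphism of `EReal`. -/
noncomputable def erMulIso (r : ℝ) (hr : 0 < r) : EReal ≃o EReal where
  toFun x := (r : EReal) * x
  invFun x := ((r⁻¹ : ℝ) : EReal) * x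
  left_inv x := by
    show ((r⁻¹ : ℝ) : EReal) * ((r : ℝ) * x : EReal) = x
    rw [← mul_assoc, ← EReal.coe_mul, inv_mul_cancel₀ hr.ne', EReal.coe_one, one_mul]
  right_inv x := by
    show ((r : ℝ) : EReal) * ((r⁻¹ : ℝ) * x : EReal) = x
    rw [← mul_assoc, ← EReal.coe_mul, mul_inv_cancel₀ hr.ne', EReal.coe_one, one_mul]
  map_rel_iff' := by
    intro x y
    show (r : EReal) * x ≤ (r : EReal) * y ↔ x ≤ y
    constructor
    · intro h
      have h2 := ermul_le_mul_left (inv_pos.mpr hr) h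
      rwa [← mul_assoc, ← mul_assoc, ← EReal.coe_mul, inv_mul_cancel₀ hr.ne',
        EReal.coe_one, one_mul, one_mul] at h2
    · exact ermul_le_mul_left hr

theorem stmt11 {Ω : Type*} [MeasurableSpace Ω] (μ : Measure Ω) [IsProbabilityMeasure μ]
    (n : ℕ) (hn : 2 ≤ n) (X : Ω → ℝ) (Xs : Fin n → Ω → ℝ)
    (hXm : Measurable X) (hXsm : ∀ i, Measurable (Xs i))
    (hpos : ∀ ω, 0 < X ω)
    (hub : ∀ a > (0 : ℝ), 0 < μ {ω | X ω > a})
    (hheavy : ∀ s > (0 : ℝ), ∫⁻ ω, ENNReal.ofReal (Real.exp (s * X ω)) ∂μ = ⊤)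
    (hident : ∀ i, Measure.map (Xs i) μ = Measure.map X μ)
    (hindep : ProbabilityTheory.iIndepFun Xs μ)
    (hcontF : ∀ x : ℝ, μ {ω | X ω = x} = 0)
    (g : (Fin n → ℝ) → ℝ)
    (hmono : ∀ (v : Fin n → ℝ) (i : Fin n), Monotone (fun t => g (Function.update v i t)))
    (hgtop : ∀ (v : Fin n → ℝ) (i : Fin n),
      Tendsto (fun t => g (Function.update v i t)) atTop atTop)
    (ginv : ℝ → ℝ)
    (hinv1 : ∀ x : ℝ, ginv (g (fun _ => x)) = x)
    (hinv2 : ∀ x : ℝ, g (fun _ => ginv x) = x) :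
    (1 : EReal) ≤ Filter.liminf
        (fun x : ℝ =>
          ((-Real.log (μ {ω | g (fun i => Xs i ω) > x}).toReal
              / -Real.log (μ {ω | X ω > ginv x}).toReal : ℝ) : EReal)) atTop ∧
    Filter.liminf
        (fun x : ℝ =>
          ((-Real.log (μ {ω | g (fun i => Xs i ω) > x}).toReal
              / -Real.log (μ {ω | X ω > ginv x}).toReal : ℝ) : EReal)) atTop ≤ (n : EReal) ∧
    ∃ c ∈ Icc (1 : ℝ) (n : ℝ),
      Filter.liminf
        (fun x : ℝ =>
          ((-Real.log (μ {ω | g (fun i => Xs i ω) > x}).toReal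
              / (c * -Real.log (μ {ω | X ω > ginv x}).toReal) : ℝ) : EReal)) atTop = 1 := by
  classical
  haveI : Nonempty (Fin n) := ⟨⟨0, by omega⟩⟩
  have hgm : ∀ {v w : Fin n → ℝ}, (∀ i, v i ≤ w i) → g v ≤ g w :=
    fun h => gmono_aux g hmono h
  set gd : ℝ → ℝ := fun t => g (fun _ => t) with hgddef
  have hgd_mono : Monotone gd := fun a b hab => hgm (fun _ => hab)
  have hgd_sm : StrictMono gd := by
    refine hgd_mono.strictMono_of_injective (fun a b hab => ?_)
    have h2 := congrArg ginv hab
    simpa [hgddef, hinv1] using h2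
  have hginv_gd : ∀ t, ginv (gd t) = t := fun t => hinv1 t
  have hgd_ginv : ∀ x, gd (ginv x) = x := fun x => hinv2 x
  have hginv_sm : StrictMono ginv := by
    intro a b hab
    by_contra hle
    push_neg at hle
    have h2 := hgd_mono hle
    rw [hgd_ginv, hgd_ginv] at h2
    exact absurd hab (not_lt.2 h2)
  have hginv_top : Tendsto ginv atTop atTop :=
    tendsto_atTop_atTop_of_monotone hginv_sm.monotone
      (fun b => ⟨gd b, (hginv_gd b).ge⟩)
  -- tail probabilities
  set q : ℝ → ℝ≥0∞ := fun t => μ {ω | X ω > t} with hqdef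
  have hq_meas : ∀ t : ℝ, MeasurableSet {ω | X ω > t} := fun t => hXm measurableSet_Ioi
  have hq_pos : ∀ t, 0 < q t := by
    intro t
    rcases le_or_gt t 0 with ht | ht
    · have huniv : {ω | X ω > t} = univ :=
        eq_univ_of_forall fun ω => lt_of_le_of_lt ht (hpos ω)
      simp [hqdef, huniv]
    · exact hub t ht
  have hq_ne_top : ∀ t, q t ≠ ⊤ := fun t => measure_ne_top μ _
  have hqs : ∀ (i : Fin n) (t : ℝ), μ {ω | Xs i ω > t} = q t := by
    intro i t
    have h1 : μ {ω | Xs i ω > t} = Measure.map (Xs i) μ (Ioi t) := by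
      rw [Measure.map_apply (hXsm i) measurableSet_Ioi]; rfl
    rw [h1, hident i, Measure.map_apply hXm measurableSet_Ioi]; rfl
  have hq0 : Tendsto q atTop (𝓝 0) := by
    have hanti : Antitone (fun t : ℝ => {ω | X ω > t}) :=
      fun a b hab ω hω => lt_of_le_of_lt hab hω
    have h := tendsto_measure_iInter_atTop (μ := μ) (s := fun t : ℝ => {ω | X ω > t})
      (fun t => (hq_meas t).nullMeasurableSet) hanti ⟨0, measure_ne_top μ _⟩
    have hempty : ⋂ t : ℝ, {ω | X ω > t} = ∅ := by
      ext ω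
      simp only [mem_iInter, mem_setOf_eq, mem_empty_iff_false, iff_false, not_forall, not_lt]
      exact ⟨X ω, le_rfl⟩
    rw [hempty, measure_empty] at h
    exact h
  -- real tail probabilities
  set b : ℝ → ℝ := fun x => (q (ginv x)).toReal with hbdef
  have hb_pos : ∀ x, 0 < b x := fun x =>
    ENNReal.toReal_pos (hq_pos _).ne' (hq_ne_top _)
  set B : ℝ → ℝ := fun x => -Real.log (b x) with hBdef
  have hB_top : Tendsto B atTop atTop := by
    have h0 : Tendsto (fun x => b x) atTop (𝓝 0) := by
      have h0' := (ENNReal.tendsto_toReal (a := 0) (by simp)).comp (hq0.comp hginv_top)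
      rw [ENNReal.toReal_zero] at h0'
      exact h0'
    have h1 : Tendsto (fun x => b x) atTop (𝓝[>] 0) :=
      tendsto_nhdsWithin_of_tendsto_nhds_of_eventually_within _ h0
        (Eventually.of_forall fun x => hb_pos x)
    have h2 := Real.tendsto_log_nhdsGT_zero.comp h1
    exact tendsto_neg_atBot_atTop.comp h2
  -- Z and its tail
  set Z : Ω → ℝ := fun ω => g (fun i => Xs i ω) with hZdef
  set P : ℝ → ℝ := fun x => (μ {ω | Z ω > x}).toReal with hPdef
  set A : ℝ → ℝ := fun x => -Real.log (P x) with hAdef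
  -- upper bound on tail of Z
  have hsub1 : ∀ x : ℝ, {ω | Z ω > x} ⊆ ⋃ i, {ω | Xs i ω > ginv x} := by
    intro x ω hω
    by_contra hc
    simp only [mem_iUnion, mem_setOf_eq, not_exists, not_lt] at hc
    have hle : Z ω ≤ gd (ginv x) := hgm (fun i => hc i)
    rw [hgd_ginv] at hle
    exact absurd hω (not_lt.2 hle)
  have hq_ub : ∀ x : ℝ, μ {ω | Z ω > x} ≤ (n : ℝ≥0∞) * q (ginv x) := by
    intro x
    calc μ {ω | Z ω > x} ≤ μ (⋃ i, {ω | Xs i ω > ginv x}) := measure_mono (hsub1 x)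
      _ ≤ ∑ i : Fin n, μ {ω | Xs i ω > ginv x} := measure_iUnion_fintype_le _ _
      _ = (n : ℝ≥0∞) * q (ginv x) := by
        simp [hqs, Finset.sum_const, Finset.card_univ, nsmul_eq_mul]
  -- lower bound on tail of Z
  have hsub2 : ∀ x : ℝ, (⋂ i, {ω | Xs i ω > ginv x}) ⊆ {ω | Z ω > x} := by
    intro x ω hω
    simp only [mem_iInter, mem_setOf_eq] at hω
    have hmin : ginv x < Finset.univ.inf' Finset.univ_nonempty (fun i => Xs i ω) := by
      rw [Finset.lt_inf'_iff]
      exact fun i _ => hω i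
    have h1 : gd (Finset.univ.inf' Finset.univ_nonempty (fun i => Xs i ω)) ≤ Z ω :=
      hgm (fun i => Finset.inf'_le _ (Finset.mem_univ i))
    have h2 := hgd_sm hmin
    rw [hgd_ginv] at h2
    exact lt_of_lt_of_le h2 h1
  have hq_lb : ∀ x : ℝ, q (ginv x) ^ n ≤ μ {ω | Z ω > x} := by
    intro x
    have hprod : μ (⋂ i, {ω | Xs i ω > ginv x}) = q (ginv x) ^ n := by
      have h := hindep.measure_inter_preimage_eq_mul Finset.univ
        (sets := fun _ => Ioi (ginv x)) (fun i _ => measurableSet_Ioi)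
      have he : (⋂ i ∈ Finset.univ, Xs i ⁻¹' Ioi (ginv x)) = ⋂ i, {ω | Xs i ω > ginv x} := by
        simp only [Finset.mem_univ, iInter_true]; rfl
      rw [he] at h
      rw [h]
      have hqq : ∀ i : Fin n, μ (Xs i ⁻¹' Ioi (ginv x)) = q (ginv x) := fun i => hqs i (ginv x)
      simp [hqq, Finset.prod_const, Finset.card_univ]
    rw [← hprod]
    exact measure_mono (hsub2 x)
  -- pointwise real bounds
  have hP_lb : ∀ x : ℝ, b x ^ n ≤ P x := by
    intro x
    have h1 : (q (ginv x) ^ n).toReal ≤ (μ {ω | Z ω > x}).toReal :=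
      ENNReal.toReal_mono (measure_ne_top μ _) (hq_lb x)
    rwa [ENNReal.toReal_pow] at h1
  have hP_pos : ∀ x : ℝ, 0 < P x := fun x =>
    lt_of_lt_of_le (pow_pos (hb_pos x) n) (hP_lb x)
  have hP_ub : ∀ x : ℝ, P x ≤ (n : ℝ) * b x := by
    intro x
    have h1 : (μ {ω | Z ω > x}).toReal ≤ ((n : ℝ≥0∞) * q (ginv x)).toReal :=
      ENNReal.toReal_mono (ENNReal.mul_ne_top (by simp) (hq_ne_top _)) (hq_ub x)
    rwa [ENNReal.toReal_mul, ENNReal.toReal_natCast] at h1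
  have hA_ub : ∀ x : ℝ, A x ≤ (n : ℝ) * B x := by
    intro x
    have h1 : Real.log (b x ^ n) ≤ Real.log (P x) :=
      Real.log_le_log (pow_pos (hb_pos x) n) (hP_lb x)
    rw [Real.log_pow] at h1
    simp only [hAdef, hBdef]
    nlinarith [h1]
  have hn_pos : (0 : ℝ) < n := by positivity
  have hA_lb : ∀ x : ℝ, B x - Real.log n ≤ A x := by
    intro x
    have h1 : Real.log (P x) ≤ Real.log ((n : ℝ) * b x) :=
      Real.log_le_log (hP_pos x) (hP_ub x)
    rw [Real.log_mul hn_pos.ne' (hb_pos x).ne'] at h1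
    simp only [hAdef, hBdef]
    linarith
  -- eventual bounds on the ratio
  have hBev : ∀ᶠ x in atTop, 1 ≤ B x := hB_top.eventually_ge_atTop 1
  set f : ℝ → ℝ := fun x => A x / B x with hfdef
  have hfub : ∀ᶠ x in atTop, f x ≤ (n : ℝ) := by
    filter_upwards [hBev] with x hx
    rw [hfdef]
    rw [div_le_iff₀ (by linarith : (0:ℝ) < B x)]
    calc A x ≤ (n : ℝ) * B x := hA_ub x
      _ = (n : ℝ) * B x := rfl
  have hflb : ∀ᶠ x in atTop, 1 - Real.log n / B x ≤ f x := by
    filter_upwards [hBev] with x hx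
    have hBx : (0:ℝ) < B x := by linarith
    have h1 : (B x - Real.log n) / B x ≤ A x / B x := by
      gcongr
      exact hA_lb x
    calc 1 - Real.log n / B x = (B x - Real.log n) / B x := by field_simp
      _ ≤ f x := h1
  -- liminf bounds
  have hL1 : (1 : EReal) ≤ liminf (fun x : ℝ => ((f x : ℝ) : EReal)) atTop := by
    have hlimr : Tendsto (fun x : ℝ => 1 - Real.log n / B x) atTop (𝓝 1) := by
      have h0 : Tendsto (fun x : ℝ => Real.log n / B x) atTop (𝓝 0) :=
        Tendsto.div_atTop tendsto_const_nhds hB_top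
      simpa using tendsto_const_nhds.sub h0
    have hlim : Tendsto (fun x : ℝ => ((1 - Real.log n / B x : ℝ) : EReal)) atTop
        (𝓝 (1 : EReal)) := by
      have hcont := (continuous_coe_real_ereal.tendsto (1 : ℝ)).comp hlimr
      rw [EReal.coe_one] at hcont
      exact hcont
    rw [← hlim.liminf_eq]
    refine liminf_le_liminf ?_
    filter_upwards [hflb] with x hx
    exact EReal.coe_le_coe_iff.mpr hx
  have hL2 : liminf (fun x : ℝ => ((f x : ℝ) : EReal)) atTop ≤ (n : EReal) := by
    refine liminf_le_of_frequently_le ?_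
    apply Eventually.frequently
    filter_upwards [hfub] with x hx
    calc ((f x : ℝ) : EReal) ≤ ((n : ℝ) : EReal) := EReal.coe_le_coe_iff.mpr hx
      _ = (n : EReal) := by norm_cast
  refine ⟨hL1, hL2, ?_⟩
  -- part 3
  set L := liminf (fun x : ℝ => ((f x : ℝ) : EReal)) atTop with hLdef
  have hLbot : L ≠ ⊥ := fun h => by
    rw [h] at hL1
    exact absurd hL1 (not_le.mpr (by rw [← EReal.coe_one]; exact EReal.bot_lt_coe 1))
  have hncast : (n : EReal) = ((n : ℝ) : EReal) := by norm_cast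
  have hnlt : (n : EReal) < ⊤ := by rw [hncast]; exact EReal.coe_lt_top _
  have hLtop : L ≠ ⊤ := fun h => by
    rw [h] at hL2
    exact absurd hL2 (not_le.mpr hnlt)
  set c := L.toReal with hcdef
  have hLc : L = (c : EReal) := (EReal.coe_toReal hLtop hLbot).symm
  have hc1 : (1 : ℝ) ≤ c := by
    have h := hL1; rw [hLc] at h; exact_mod_cast h
  have hcn : c ≤ (n : ℝ) := by
    have h := hL2
    rw [hLc, hncast] at h
    exact EReal.coe_le_coe_iff.mp h
  have hc_pos : (0 : ℝ) < c := lt_of_lt_of_le one_pos hc1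
  refine ⟨c, ⟨hc1, hcn⟩, ?_⟩
  have hfun : (fun x : ℝ => ((A x / (c * B x) : ℝ) : EReal)) =
      fun x : ℝ => (erMulIso c⁻¹ (inv_pos.mpr hc_pos)) ((f x : ℝ) : EReal) := by
    funext x
    show ((A x / (c * B x) : ℝ) : EReal) = ((c⁻¹ : ℝ) : EReal) * ((f x : ℝ) : EReal)
    rw [← EReal.coe_mul]
    congr 1
    rw [hfdef]
    ring
  have hkey : liminf (fun x : ℝ => ((A x / (c * B x) : ℝ) : EReal)) atTop = 1 := by
    rw [hfun, ← (erMulIso c⁻¹ (inv_pos.mpr hc_pos)).liminf_apply, ← hLdef, hLc]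
    show ((c⁻¹ : ℝ) : EReal) * ((c : ℝ) : EReal) = 1
    rw [← EReal.coe_mul, inv_mul_cancel₀ hc_pos.ne', EReal.coe_one]
  exact hkey
end

section
/- Let X be a non-negative heavy-tailed random variable with hazard function R (so R(x)/x → has liminf 0). Define x_0 = 0 and x_n = min{x : R(x) ≥ n} for n ≥ 1 (well-defined by right-continuity of R), and let g be the piecewise-linear function with g(0) = 0 and g(x_n) = √(n-1) for n ≥ 1, linearly interpolated between consecutive points x_n. Then g is continuous, g(x) → ∞ as x → ∞, and g(x) = o(R(x)) as x → ∞. -/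
open MeasureTheory Filter Set

private lemma continuousOn_union_closed' {f : ℝ → ℝ} {s t : Set ℝ} (hs : IsClosed s)
    (ht : IsClosed t) (hfs : ContinuousOn f s) (hft : ContinuousOn f t) :
    ContinuousOn f (s ∪ t) := by
  intro y hy
  have h1 : ContinuousWithinAt f s y := by
    by_cases h : y ∈ s
    · exact hfs y h
    · exact continuousWithinAt_of_notMem_closure (by rwa [hs.closure_eq])
  have h2 : ContinuousWithinAt f t y := by
    by_cases h : y ∈ t
    · exact hft y h
    · exact continuousWithinAt_of_notMem_closure (by rwa [ht.closure_eq])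
  exact h1.union h2

theorem stmt17 {Ω : Type*} [MeasurableSpace Ω] (μ : Measure Ω) [IsProbabilityMeasure μ]
    (X : Ω → ℝ) (hXnn : ∀ ω, 0 ≤ X ω)
    (hub : ∀ a > (0 : ℝ), 0 < μ {ω | X ω > a})
    (hheavy : ∀ s > (0 : ℝ), ∫⁻ ω, ENNReal.ofReal (Real.exp (s * X ω)) ∂μ = ⊤)
    (R : ℝ → ℝ) (hR : ∀ t, R t = -Real.log (μ {ω | X ω > t}).toReal)
    (x : ℕ → ℝ) (hx0 : x 0 = 0)
    (hxn : ∀ n : ℕ, 1 ≤ n → IsLeast {t : ℝ | (n : ℝ) ≤ R t} (x n))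
    (g : ℝ → ℝ) (hg0 : g 0 = 0)
    (hgn : ∀ n : ℕ, 1 ≤ n → g (x n) = Real.sqrt ((n : ℝ) - 1))
    (hglin : ∀ n : ℕ, x n < x (n + 1) →
      ∀ t ∈ Icc (x n) (x (n + 1)),
        g t = g (x n) + (t - x n) / (x (n + 1) - x n) * (g (x (n + 1)) - g (x n))) :
    ContinuousOn g (Ici 0) ∧ Tendsto g atTop atTop ∧
      Tendsto (fun t => g t / R t) atTop (nhds 0) := by
  classical
  -- positivity of survival probability
  have hμpos : ∀ t : ℝ, 0 < μ {ω | X ω > t} := by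
    intro t
    rcases le_or_gt t 1 with h | h
    · have hsub : {ω | X ω > 1} ⊆ {ω | X ω > t} := fun ω hω => lt_of_le_of_lt h hω
      exact lt_of_lt_of_le (hub 1 one_pos) (measure_mono hsub)
    · exact hub t (lt_trans one_pos h)
  have hμfin : ∀ t : ℝ, μ {ω | X ω > t} ≠ ⊤ := fun t => measure_ne_top μ _
  have hμtpos : ∀ t : ℝ, 0 < (μ {ω | X ω > t}).toReal := fun t =>
    ENNReal.toReal_pos (hμpos t).ne' (hμfin t)
  -- monotonicity of R
  have Rmono : Monotone R := by
    intro s t hst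
    rw [hR s, hR t, neg_le_neg_iff]
    have hsub : {ω | X ω > t} ⊆ {ω | X ω > s} := fun ω hω => lt_of_le_of_lt hst hω
    have := ENNReal.toReal_mono (hμfin s) (measure_mono hsub)
    exact Real.log_le_log (hμtpos t) this
  -- x 1 is nonnegative
  have hx1 : 0 ≤ x 1 := by
    by_contra h
    push_neg at h
    have huniv : {ω | X ω > x 1} = Set.univ := by
      ext ω
      simp only [mem_setOf_eq, mem_univ, iff_true]
      exact lt_of_lt_of_le h (hXnn ω)
    have h1 := (hxn 1 le_rfl).1
    simp only [mem_setOf_eq, hR, huniv, measure_univ] at h1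
    norm_num at h1
  -- strict monotonicity of x for n ≥ 1
  have hxlt : ∀ n : ℕ, 1 ≤ n → x n < x (n + 1) := by
    intro n hn
    have hle : x n ≤ x (n + 1) := by
      apply (hxn n hn).2
      have h1 := (hxn (n + 1) (by omega)).1
      simp only [mem_setOf_eq] at h1 ⊢
      push_cast at h1 ⊢
      linarith
    rcases lt_or_eq_of_le hle with h | h
    · exact h
    · exfalso
      have h1 := hgn n hn
      have h2 := hgn (n + 1) (by omega)
      rw [← h, h1] at h2
      have hnn : (0 : ℝ) ≤ (n : ℝ) - 1 := by
        have : (1 : ℝ) ≤ (n : ℝ) := by exact_mod_cast hn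
        linarith
      have e1 : ((n : ℝ) - 1) = (((n : ℕ) + 1 : ℕ) : ℝ) - 1 := by
        have := congrArg (fun y => y ^ 2) h2
        simpa [Real.sq_sqrt hnn, Real.sq_sqrt (by push_cast; linarith : (0:ℝ) ≤ (((n:ℕ) + 1 : ℕ) : ℝ) - 1)] using this
      push_cast at e1
      linarith
  have hxmono : Monotone x := by
    apply monotone_nat_of_le_succ
    intro n
    cases n with
    | zero => rw [hx0]; exact hx1
    | succ k => exact (hxlt (k + 1) (by omega)).le
  -- x tends to infinity
  have hxtop : Tendsto x atTop atTop := by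
    rw [tendsto_atTop]
    intro a
    obtain ⟨N, hN⟩ : ∃ N : ℕ, R a < N := exists_nat_gt (R a)
    refine eventually_atTop.2 ⟨N + 1, fun n hn => ?_⟩
    by_contra h
    push_neg at h
    have h1 : (n : ℝ) ≤ R (x n) := (hxn n (by omega)).1
    have h2 : R (x n) ≤ R a := Rmono h.le
    have h3 : (N : ℝ) ≤ (n : ℝ) := by exact_mod_cast Nat.le_of_succ_le hn
    linarith
  -- locating t in an interval
  have loc : ∀ (n : ℕ) (t : ℝ), x n ≤ t → ∃ m, n ≤ m ∧ x m ≤ t ∧ t < x (m + 1) := by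
    intro n t ht
    have hex : ∃ k, t < x k := (hxtop.eventually (eventually_gt_atTop t)).exists
    have hK : t < x (Nat.find hex) := Nat.find_spec hex
    have hKge : n + 1 ≤ Nat.find hex := by
      by_contra h
      push_neg at h
      have : x (Nat.find hex) ≤ x n := hxmono (by omega)
      linarith
    refine ⟨Nat.find hex - 1, by omega, ?_, ?_⟩
    · have h1 := Nat.find_min hex (m := Nat.find hex - 1) (by omega)
      push_neg at h1
      exact h1
    · have h2 : Nat.find hex - 1 + 1 = Nat.find hex := by omega
      rw [h2]
      exact hK
  -- bounds on g on each interval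
  have gbound : ∀ m : ℕ, 1 ≤ m → ∀ t, x m ≤ t → t ≤ x (m + 1) →
      Real.sqrt ((m : ℝ) - 1) ≤ g t ∧ g t ≤ Real.sqrt m := by
    intro m hm t ht1 ht2
    have hlt := hxlt m hm
    have hform := hglin m hlt t ⟨ht1, ht2⟩
    rw [hgn m hm, hgn (m + 1) (by omega)] at hform
    have hc : (((m : ℕ) + 1 : ℕ) : ℝ) - 1 = (m : ℝ) := by push_cast; ring
    rw [hc] at hform
    have hmr : (1 : ℝ) ≤ (m : ℝ) := by exact_mod_cast hm
    have hab : Real.sqrt ((m : ℝ) - 1) ≤ Real.sqrt m := Real.sqrt_le_sqrt (by linarith)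
    have hd : 0 < x (m + 1) - x m := by linarith
    have h0 : 0 ≤ (t - x m) / (x (m + 1) - x m) := div_nonneg (by linarith) hd.le
    have h1 : (t - x m) / (x (m + 1) - x m) ≤ 1 := (div_le_one hd).2 (by linarith)
    constructor
    · nlinarith [mul_nonneg h0 (sub_nonneg.2 hab)]
    · nlinarith [mul_nonneg (sub_nonneg.2 h1) (sub_nonneg.2 hab)]
  -- continuity on each interval
  have hcont : ∀ n : ℕ, ContinuousOn g (Icc (x n) (x (n + 1))) := by
    intro n
    rcases eq_or_lt_of_le (hxmono (Nat.le_succ n)) with h | h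
    · rw [← h, Icc_self]
      exact continuousOn_singleton g _
    · refine ContinuousOn.congr (f := fun t =>
        g (x n) + (t - x n) / (x (n + 1) - x n) * (g (x (n + 1)) - g (x n))) ?_
        (fun t ht => hglin n h t ht)
      exact (continuous_const.add
        ((((continuous_id.sub continuous_const).div_const _).mul continuous_const))).continuousOn
  -- continuity on Icc (x 0) (x N)
  have hIcc : ∀ N : ℕ, ContinuousOn g (Icc (x 0) (x N)) := by
    intro N
    induction N with
    | zero => rw [Icc_self]; exact continuousOn_singleton g _
    | succ k ih =>
      have hun : Icc (x 0) (x (k + 1)) = Icc (x 0) (x k) ∪ Icc (x k) (x (k + 1)) :=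
        (Icc_union_Icc_eq_Icc (hxmono (Nat.zero_le k)) (hxmono (Nat.le_succ k))).symm
      rw [hun]
      exact continuousOn_union_closed' isClosed_Icc isClosed_Icc ih (hcont k)
  -- part 1: continuity on Ici 0
  have part1 : ContinuousOn g (Ici 0) := by
    intro t ht
    obtain ⟨N, hN⟩ : ∃ N, t < x N := (hxtop.eventually (eventually_gt_atTop t)).exists
    have h1 : ContinuousWithinAt g (Icc (x 0) (x N)) t :=
      hIcc N t ⟨by rw [hx0]; exact ht, hN.le⟩
    apply h1.mono_of_mem_nhdsWithin
    have hmem : Ici (0 : ℝ) ∩ Iio (x N) ∈ nhdsWithin t (Ici (0 : ℝ)) :=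
      inter_mem self_mem_nhdsWithin (mem_nhdsWithin_of_mem_nhds (Iio_mem_nhds hN))
    refine Filter.mem_of_superset hmem ?_
    rintro y ⟨hy1, hy2⟩
    exact ⟨by rw [hx0]; exact hy1, hy2.le⟩
  -- lower bound for g past x n
  have glb : ∀ n : ℕ, 1 ≤ n → ∀ t, x n ≤ t → Real.sqrt ((n : ℝ) - 1) ≤ g t := by
    intro n hn t ht
    obtain ⟨m, hm, h1, h2⟩ := loc n t ht
    refine le_trans (Real.sqrt_le_sqrt ?_) (gbound m (by omega) t h1 h2.le).1
    have : (n : ℝ) ≤ (m : ℝ) := by exact_mod_cast hm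
    linarith
  -- part 2
  have part2 : Tendsto g atTop atTop := by
    rw [tendsto_atTop]
    intro b
    obtain ⟨n, hn⟩ : ∃ n : ℕ, b ^ 2 + 1 ≤ (n : ℝ) := exists_nat_ge _
    have hn1 : 1 ≤ n := by
      by_contra h
      push_neg at h
      interval_cases n
      · simp at hn; nlinarith
    filter_upwards [eventually_ge_atTop (x n)] with t ht
    calc b ≤ |b| := le_abs_self b
      _ = Real.sqrt (b ^ 2) := (Real.sqrt_sq_eq_abs b).symm
      _ ≤ Real.sqrt ((n : ℝ) - 1) := Real.sqrt_le_sqrt (by linarith)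
      _ ≤ g t := glb n hn1 t ht
  refine ⟨part1, part2, ?_⟩
  -- part 3
  have key : ∀ n : ℕ, 1 ≤ n → ∀ t, x n ≤ t →
      0 ≤ g t / R t ∧ g t / R t ≤ 1 / Real.sqrt n := by
    intro n hn t ht
    obtain ⟨m, hm, h1, h2⟩ := loc n t ht
    have hm1 : 1 ≤ m := le_trans hn hm
    have hmr : (1 : ℝ) ≤ (m : ℝ) := by exact_mod_cast hm1
    have hgb := gbound m hm1 t h1 h2.le
    have hg0' : 0 ≤ g t := le_trans (Real.sqrt_nonneg _) hgb.1
    have hRt : (m : ℝ) ≤ R t := le_trans (hxn m hm1).1 (Rmono h1)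
    have hRpos : 0 < R t := lt_of_lt_of_le (by linarith) hRt
    constructor
    · exact div_nonneg hg0' hRpos.le
    · have hsm : 0 < Real.sqrt (m : ℝ) := Real.sqrt_pos.2 (by linarith)
      have step1 : g t / R t ≤ Real.sqrt m / (m : ℝ) := by
        apply div_le_div₀ (Real.sqrt_nonneg _) hgb.2 (by linarith) hRt
      have step2 : Real.sqrt m / (m : ℝ) = 1 / Real.sqrt m := by
        rw [eq_div_iff hsm.ne', div_mul_eq_mul_div, Real.mul_self_sqrt (by linarith),
          div_self (by linarith)]
      have hsn : 0 < Real.sqrt (n : ℝ) := Real.sqrt_pos.2 (by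
        have : (1 : ℝ) ≤ (n : ℝ) := by exact_mod_cast hn
        linarith)
      have step3 : 1 / Real.sqrt (m : ℝ) ≤ 1 / Real.sqrt (n : ℝ) := by
        apply one_div_le_one_div_of_le hsn
        exact Real.sqrt_le_sqrt (by exact_mod_cast hm)
      linarith
  rw [NormedAddCommGroup.tendsto_nhds_zero]
  intro ε hε
  obtain ⟨n, hn⟩ : ∃ n : ℕ, 1 / ε ^ 2 + 1 ≤ (n : ℝ) := exists_nat_ge _
  have hεpos : 0 < 1 / ε ^ 2 := by positivity
  have hn1 : 1 ≤ n := by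
    by_contra h
    push_neg at h
    interval_cases n
    · push_cast at hn; nlinarith [hεpos]
  have hlt : 1 / Real.sqrt (n : ℝ) < ε := by
    have h1 : 1 / ε < Real.sqrt (n : ℝ) := by
      have : Real.sqrt (1 / ε ^ 2) < Real.sqrt (n : ℝ) :=
        Real.sqrt_lt_sqrt hεpos.le (by linarith)
      calc 1 / ε = Real.sqrt ((1 / ε) ^ 2) := (Real.sqrt_sq (by positivity)).symm
        _ = Real.sqrt (1 / ε ^ 2) := by rw [div_pow, one_pow]
        _ < Real.sqrt (n : ℝ) := this
    have hsn : 0 < Real.sqrt (n : ℝ) := lt_trans (by positivity) h1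
    rw [div_lt_iff₀ hsn]
    rw [div_lt_iff₀ hε] at h1
    linarith [mul_comm ε (Real.sqrt (n : ℝ))]
  filter_upwards [eventually_ge_atTop (x n)] with t ht
  obtain ⟨hge, hle⟩ := key n hn1 t ht
  rw [Real.norm_of_nonneg hge]
  linarith
end

section
/- Let h_1, h_2 : [0,∞) → [0,∞) be continuous strictly increasing functions with h_2(x) < h_1(x) for all x ≥ 0 and h_2(x) → ∞ as x → ∞. Define x_0 = 1 and x_{n+1} = h_2^{-1}(h_1(x_n)). Then the x_n tend to ∞, the values p_n = exp(-h_2(x_n)) - exp(-h_1(x_n)) are nonnegative and sum (together with possible mass elsewhere) to at most 1 in such a way that there exists a discrete random variable X with P(X = x_n) = c·p_n for a normalizing constant, whose hazard function R satisfies limsup_{x→∞} R(x)/h_1(x) = 1 and liminf_{x→∞} R(x)/h_2(x) = 1. -/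
open MeasureTheory Filter Set

theorem stmt18 (h₁ h₂ : ℝ → ℝ)
    (h₁cont : ContinuousOn h₁ (Ici 0)) (h₂cont : ContinuousOn h₂ (Ici 0))
    (h₁mono : StrictMonoOn h₁ (Ici 0)) (h₂mono : StrictMonoOn h₂ (Ici 0))
    (h₁nn : ∀ x ≥ (0 : ℝ), 0 ≤ h₁ x) (h₂nn : ∀ x ≥ (0 : ℝ), 0 ≤ h₂ x)
    (hlt : ∀ x ≥ (0 : ℝ), h₂ x < h₁ x)
    (h₂top : Tendsto h₂ atTop atTop)
    (x : ℕ → ℝ) (hx0 : x 0 = 1)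
    (hxrec : ∀ n : ℕ, x (n + 1) ≥ 0 ∧ h₂ (x (n + 1)) = h₁ (x n)) :
    Tendsto x atTop atTop ∧
    (∀ n : ℕ, 0 ≤ Real.exp (-h₂ (x n)) - Real.exp (-h₁ (x n))) ∧
    ∃ (μ : Measure ℝ) (_ : IsProbabilityMeasure μ) (c : ℝ), 0 < c ∧
      (∀ n : ℕ, μ {x n} =
        ENNReal.ofReal (c * (Real.exp (-h₂ (x n)) - Real.exp (-h₁ (x n))))) ∧
      Filter.limsup
        (fun t : ℝ => ((-Real.log (μ (Set.Ioi t)).toReal / h₁ t : ℝ) : EReal)) atTop = 1 ∧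
      Filter.liminf
        (fun t : ℝ => ((-Real.log (μ (Set.Ioi t)).toReal / h₂ t : ℝ) : EReal)) atTop = 1 := by
  -- basic facts about x
  have hxnn : ∀ n, 0 ≤ x n := by
    intro n
    cases n with
    | zero => rw [hx0]; norm_num
    | succ k => exact (hxrec k).1
  have hxlt : ∀ n, x n < x (n + 1) := by
    intro n
    have h2 : h₂ (x n) < h₂ (x (n + 1)) := by
      rw [(hxrec n).2]; exact hlt _ (hxnn n)
    exact (h₂mono.lt_iff_lt (hxnn n) (hxnn (n + 1))).mp h2
  have hxm : StrictMono x := strictMono_nat_of_lt_succ hxlt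
  have hx1 : ∀ n, (1 : ℝ) ≤ x n := by
    intro n
    have := hxm.monotone (Nat.zero_le n)
    rwa [hx0] at this
  have htop : Tendsto x atTop atTop := by
    rcases tendsto_of_monotone hxm.monotone with h | ⟨l, hl⟩
    · exact h
    · exfalso
      have hx0l : x 0 ≤ l := hxm.monotone.ge_of_tendsto hl 0
      have hlmem : (0 : ℝ) ≤ l := le_trans (by linarith [hx1 0]) hx0l
      have hxin : Tendsto x atTop (nhdsWithin l (Ici 0)) :=
        tendsto_nhdsWithin_iff.mpr ⟨hl, Eventually.of_forall hxnn⟩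
      have t2 : Tendsto (fun n => h₂ (x n)) atTop (nhds (h₂ l)) :=
        (h₂cont l hlmem).tendsto.comp hxin
      have t1 : Tendsto (fun n => h₁ (x n)) atTop (nhds (h₁ l)) :=
        (h₁cont l hlmem).tendsto.comp hxin
      have t2' : Tendsto (fun n => h₂ (x (n + 1))) atTop (nhds (h₂ l)) :=
        t2.comp (tendsto_add_atTop_nat 1)
      have heq : (fun n => h₂ (x (n + 1))) = fun n => h₁ (x n) :=
        funext fun n => (hxrec n).2
      rw [heq] at t2'
      exact absurd (tendsto_nhds_unique t2' t1) (ne_of_lt (hlt l hlmem))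
  -- nonnegativity of the masses
  have hpnn0 : ∀ n : ℕ, 0 ≤ Real.exp (-h₂ (x n)) - Real.exp (-h₁ (x n)) := by
    intro n
    have h1 := hlt (x n) (hxnn n)
    have h2 : Real.exp (-h₁ (x n)) ≤ Real.exp (-h₂ (x n)) :=
      Real.exp_le_exp.mpr (by linarith)
    linarith
  refine ⟨htop, hpnn0, ?_⟩
  -- the tail values and masses
  set E : ℕ → ℝ := fun n => Real.exp (-h₂ (x n)) with hE
  set p : ℕ → ℝ := fun n => E n - E (n + 1) with hp
  have hpeq : ∀ n, p n = Real.exp (-h₂ (x n)) - Real.exp (-h₁ (x n)) := by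
    intro n
    simp only [hp, hE, (hxrec n).2]
  have hpnn : ∀ n, 0 ≤ p n := fun n => by rw [hpeq]; exact hpnn0 n
  have hEpos : ∀ n, 0 < E n := fun n => Real.exp_pos _
  have hE0le1 : E 0 ≤ 1 := by
    have : 0 ≤ h₂ (x 0) := h₂nn _ (hxnn 0)
    simpa only [hE] using Real.exp_le_one_iff.mpr (by linarith)
  have hEtop : Tendsto (fun n => h₂ (x n)) atTop atTop := h₂top.comp htop
  have hE0 : Tendsto E atTop (nhds 0) := by
    have : Tendsto (fun n => -h₂ (x n)) atTop atBot := tendsto_neg_atBot_iff.mpr hEtop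
    exact Real.tendsto_exp_atBot.comp this
  -- tail sums
  have htail : ∀ N : ℕ, ∑' i : ℕ, ENNReal.ofReal (p (i + N)) = ENNReal.ofReal (E N) := by
    intro N
    have hpart : ∀ k, ∑ i ∈ Finset.range k, ENNReal.ofReal (p (i + N))
        = ENNReal.ofReal (E N - E (N + k)) := by
      intro k
      rw [← ENNReal.ofReal_sum_of_nonneg (fun i _ => hpnn (i + N))]
      congr 1
      calc ∑ i ∈ Finset.range k, p (i + N)
          = ∑ i ∈ Finset.range k, ((fun j => E (j + N)) i - (fun j => E (j + N)) (i + 1)) := by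
            refine Finset.sum_congr rfl fun i _ => ?_
            simp only [hp]
            congr 2
            omega
        _ = E (0 + N) - E (k + N) := Finset.sum_range_sub' _ k
        _ = E N - E (N + k) := by rw [Nat.zero_add, Nat.add_comm]
    have h2 : Tendsto (fun k => E (N + k)) atTop (nhds 0) := by
      have h3 := hE0.comp (tendsto_add_atTop_nat N)
      have : (fun k => E (N + k)) = fun k => E (k + N) := by
        funext k; rw [Nat.add_comm]
      rw [this]
      exact h3
    have h3 : Tendsto (fun k => E N - E (N + k)) atTop (nhds (E N - 0)) :=
      tendsto_const_nhds.sub h2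
    rw [sub_zero] at h3
    have h1 : Tendsto (fun k => ∑ i ∈ Finset.range k, ENNReal.ofReal (p (i + N)))
        atTop (nhds (ENNReal.ofReal (E N))) := by
      simp_rw [hpart]
      exact (ENNReal.continuous_ofReal.tendsto _).comp h3
    exact tendsto_nhds_unique (ENNReal.tendsto_nat_tsum _) h1
  -- the measure
  set y : ℕ → ℝ := fun m => Nat.casesOn m 0 x with hy
  set w : ℕ → ℝ := fun m => Nat.casesOn m (1 - E 0) p with hw
  set μ : Measure ℝ := Measure.sum (fun m => ENNReal.ofReal (w m) • Measure.dirac (y m)) with hμdef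
  have happ : ∀ s : Set ℝ, MeasurableSet s →
      μ s = ∑' m : ℕ, ENNReal.ofReal (w m) * s.indicator 1 (y m) := by
    intro s hs
    rw [hμdef, Measure.sum_apply _ hs]
    congr 1
    funext m
    rw [Measure.smul_apply, Measure.dirac_apply, smul_eq_mul]
  have hw0nn : 0 ≤ 1 - E 0 := by linarith
  -- probability measure
  have hprob : IsProbabilityMeasure μ := by
    constructor
    rw [happ univ MeasurableSet.univ]
    simp only [indicator_univ, Pi.one_apply, mul_one]
    rw [← Summable.sum_add_tsum_nat_add' (f := fun m => ENNReal.ofReal (w m)) (k := 1)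
      ENNReal.summable]
    have hsh : ∑' i : ℕ, ENNReal.ofReal (w (i + 1)) = ENNReal.ofReal (E 0) := by
      have : (fun i : ℕ => ENNReal.ofReal (w (i + 1))) = fun i => ENNReal.ofReal (p (i + 0)) := by
        funext i
        simp only [hw, Nat.add_zero]
      rw [this, htail 0]
    rw [hsh]
    simp only [Finset.sum_range_one]
    have hw0 : w 0 = 1 - E 0 := rfl
    rw [hw0, ← ENNReal.ofReal_add hw0nn (le_of_lt (hEpos 0))]
    norm_num
  -- singleton masses
  have hsingle : ∀ n : ℕ, μ {x n} = ENNReal.ofReal (p n) := by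
    intro n
    rw [happ _ (measurableSet_singleton _)]
    rw [tsum_eq_single (n + 1)]
    · have hyv : y (n + 1) = x n := rfl
      have hwv : w (n + 1) = p n := rfl
      rw [hyv, hwv, indicator_of_mem (mem_singleton _), Pi.one_apply, mul_one]
    · intro m hm
      cases m with
      | zero =>
        have h0 : y 0 = 0 := rfl
        have : (0 : ℝ) ∉ ({x n} : Set ℝ) := by
          simp only [mem_singleton_iff]
          intro h
          have := hx1 n
          rw [← h] at this
          linarith
        rw [h0, indicator_of_notMem this, mul_zero]
      | succ k =>
        have hk : k ≠ n := fun h => hm (by rw [h])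
        have hyv : y (k + 1) = x k := rfl
        have : x k ∉ ({x n} : Set ℝ) := by
          simp only [mem_singleton_iff]
          exact hxm.injective.ne hk
        rw [hyv, indicator_of_notMem this, mul_zero]
  -- tail of the measure
  have hIoi : ∀ n : ℕ, ∀ t : ℝ, x n ≤ t → t < x (n + 1) →
      μ (Ioi t) = ENNReal.ofReal (E (n + 1)) := by
    intro n t hnt htn
    rw [happ _ measurableSet_Ioi]
    rw [← Summable.sum_add_tsum_nat_add' (f := fun m => ENNReal.ofReal (w m) * (Ioi t).indicator 1 (y m))
      (k := n + 2) ENNReal.summable]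
    have hzero : ∑ i ∈ Finset.range (n + 2),
        ENNReal.ofReal (w i) * (Ioi t).indicator 1 (y i) = 0 := by
      refine Finset.sum_eq_zero fun i hi => ?_
      rw [Finset.mem_range] at hi
      cases i with
      | zero =>
        have h0 : y 0 = 0 := rfl
        have : (0 : ℝ) ∉ Ioi t := by
          simp only [mem_Ioi, not_lt]
          linarith [hx1 n]
        rw [h0, indicator_of_notMem this, mul_zero]
      | succ k =>
        have hk : k ≤ n := by omega
        have hyv : y (k + 1) = x k := rfl
        have : x k ∉ Ioi t := by
          simp only [mem_Ioi, not_lt]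
          exact le_trans (hxm.monotone hk) hnt
        rw [hyv, indicator_of_notMem this, mul_zero]
    rw [hzero, zero_add]
    have hterm : (fun i : ℕ => ENNReal.ofReal (w (i + (n + 2))) * (Ioi t).indicator 1 (y (i + (n + 2))))
        = fun i : ℕ => ENNReal.ofReal (p (i + (n + 1))) := by
      funext i
      have h1 : i + (n + 2) = (i + (n + 1)) + 1 := by omega
      rw [h1]
      have hwv : w ((i + (n + 1)) + 1) = p (i + (n + 1)) := rfl
      have hyv : y ((i + (n + 1)) + 1) = x (i + (n + 1)) := rfl
      have hmem : x (i + (n + 1)) ∈ Ioi t := by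
        simp only [mem_Ioi]
        exact lt_of_lt_of_le htn (hxm.monotone (by omega))
      rw [hwv, hyv, indicator_of_mem hmem, Pi.one_apply, mul_one]
    rw [hterm, htail (n + 1)]
  -- the hazard function value
  have hR : ∀ n : ℕ, ∀ t : ℝ, x n ≤ t → t < x (n + 1) →
      -Real.log (μ (Ioi t)).toReal = h₂ (x (n + 1)) := by
    intro n t hnt htn
    rw [hIoi n t hnt htn, ENNReal.toReal_ofReal (le_of_lt (hEpos (n + 1)))]
    simp only [hE, Real.log_exp, neg_neg]
  -- locator
  have hloc : ∀ t : ℝ, 1 ≤ t → ∃ n, x n ≤ t ∧ t < x (n + 1) := by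
    intro t ht
    have hex : ∃ n, t < x n := (htop.eventually_gt_atTop t).exists
    have hN := Nat.find_spec hex
    have hN0 : Nat.find hex ≠ 0 := by
      intro h
      rw [h, hx0] at hN
      linarith
    obtain ⟨m, hm⟩ := Nat.exists_eq_succ_of_ne_zero hN0
    refine ⟨m, ?_, by rw [← Nat.succ_eq_add_one, ← hm]; exact hN⟩
    by_contra hcon
    push_neg at hcon
    exact Nat.find_min hex (by omega) hcon
  refine ⟨μ, hprob, 1, one_pos, ?_, ?_, ?_⟩
  · intro n
    rw [one_mul, ← hpeq n]
    exact hsingle n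
  · -- limsup with h₁
    have hub : ∀ᶠ t : ℝ in atTop,
        ((-Real.log (μ (Set.Ioi t)).toReal / h₁ t : ℝ) : EReal) ≤ 1 := by
      filter_upwards [eventually_ge_atTop (1 : ℝ), h₂top.eventually_gt_atTop 0] with t ht1 ht2
      obtain ⟨n, hn1, hn2⟩ := hloc t ht1
      have h0t : (0 : ℝ) ≤ t := by linarith
      have hRt := hR n t hn1 hn2
      rw [(hxrec n).2] at hRt
      have hle : h₁ (x n) ≤ h₁ t := h₁mono.monotoneOn (hxnn n) h0t hn1
      have hpos : 0 < h₁ t := lt_trans ht2 (hlt t h0t)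
      rw [← EReal.coe_one, EReal.coe_le_coe_iff, hRt]
      exact (div_le_one hpos).mpr hle
    have hlb : ∃ᶠ t : ℝ in atTop,
        (1 : EReal) ≤ ((-Real.log (μ (Set.Ioi t)).toReal / h₁ t : ℝ) : EReal) := by
      rw [frequently_atTop]
      intro a
      obtain ⟨n, hna, hn2⟩ := ((htop.eventually_ge_atTop a).and
        (hEtop.eventually_gt_atTop 0)).exists
      refine ⟨x n, hna, ?_⟩
      have hRt := hR n (x n) le_rfl (hxlt n)
      rw [(hxrec n).2] at hRt
      have hpos : 0 < h₁ (x n) := lt_trans hn2 (hlt _ (hxnn n))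
      rw [← EReal.coe_one, EReal.coe_le_coe_iff, hRt, div_self (ne_of_gt hpos)]
    exact le_antisymm (limsup_le_of_le (by isBoundedDefault) hub) (le_limsup_of_frequently_le hlb)
  · -- liminf with h₂
    have hge : ∀ᶠ t : ℝ in atTop,
        (1 : EReal) ≤ ((-Real.log (μ (Set.Ioi t)).toReal / h₂ t : ℝ) : EReal) := by
      filter_upwards [eventually_ge_atTop (1 : ℝ), h₂top.eventually_gt_atTop 0] with t ht1 ht2
      obtain ⟨n, hn1, hn2⟩ := hloc t ht1
      have h0t : (0 : ℝ) ≤ t := by linarith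
      have hRt := hR n t hn1 hn2
      have hle : h₂ t ≤ h₂ (x (n + 1)) :=
        h₂mono.monotoneOn h0t (hxnn (n + 1)) (le_of_lt hn2)
      rw [← EReal.coe_one, EReal.coe_le_coe_iff, hRt]
      exact (one_le_div ht2).mpr hle
    have hliminf_ge : (1 : EReal) ≤ Filter.liminf
        (fun t : ℝ => ((-Real.log (μ (Set.Ioi t)).toReal / h₂ t : ℝ) : EReal)) atTop :=
      le_liminf_of_le (by isBoundedDefault) hge
    have hliminf_le : Filter.liminf
        (fun t : ℝ => ((-Real.log (μ (Set.Ioi t)).toReal / h₂ t : ℝ) : EReal)) atTop ≤ 1 := by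
      by_contra hcon
      push_neg at hcon
      obtain ⟨c, hc1, hc2⟩ := EReal.exists_between_coe_real hcon
      have hc1R : (1 : ℝ) < c := by
        rw [← EReal.coe_one] at hc1
        exact_mod_cast hc1
      have hev := eventually_lt_of_lt_liminf hc2
      have hfreq : ∃ᶠ t : ℝ in atTop,
          ((-Real.log (μ (Set.Ioi t)).toReal / h₂ t : ℝ) : EReal) ≤ (c : EReal) := by
        rw [frequently_atTop]
        intro a
        obtain ⟨n, hna, hn2⟩ := ((htop.eventually_ge_atTop a).and
          (hEtop.eventually_gt_atTop 0)).exists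
        have hb : 0 < h₂ (x (n + 1)) :=
          lt_trans hn2 (h₂mono (hxnn n) (hxnn (n + 1)) (hxlt n))
        by_cases hcase : h₂ (x (n + 1)) / c ≤ h₂ (x n)
        · refine ⟨x n, hna, ?_⟩
          have hRt := hR n (x n) le_rfl (hxlt n)
          rw [EReal.coe_le_coe_iff, hRt]
          rw [div_le_iff₀ hn2]
          rw [div_le_iff₀ (by linarith : (0:ℝ) < c)] at hcase
          linarith [hcase]
        · push_neg at hcase
          have hdivlt : h₂ (x (n + 1)) / c < h₂ (x (n + 1)) :=
            div_lt_self hb hc1R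
          have hsub : Icc (x n) (x (n + 1)) ⊆ Ici 0 :=
            fun z hz => le_trans (hxnn n) hz.1
          have hivt := intermediate_value_Icc (le_of_lt (hxlt n)) (h₂cont.mono hsub)
          obtain ⟨t, htmem, hht⟩ := hivt ⟨le_of_lt hcase, le_of_lt hdivlt⟩
          have htlt : t < x (n + 1) := by
            rcases lt_or_eq_of_le htmem.2 with h | h
            · exact h
            · exfalso
              have heq := hht
              rw [h] at heq
              linarith
          refine ⟨t, le_trans hna htmem.1, ?_⟩
          have hRt := hR n t htmem.1 htlt
          rw [EReal.coe_le_coe_iff, hRt, hht]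
          rw [div_div_eq_mul_div, mul_comm (h₂ (x (n + 1))) c, mul_div_assoc, div_self (ne_of_gt hb), mul_one]
      obtain ⟨t, ht1, ht2⟩ := (hev.and_frequently hfreq).exists
      exact absurd ht2 (not_le.mpr ht1)
    exact le_antisymm hliminf_le hliminf_ge
end
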